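/- arXiv:2211.00622 — 9 statements merged into one kernel-verified Lean document; each statement's English description precedes it below -/
import Mathlib

section
/- Let n be a positive integer divisible by 4, and let G be the cubic bipartite graph with vertex set {x_i, y_i : i ∈ ℤ_n} and edges x_i y_{i-2}, x_i y_i, x_i y_{i+1} (indices mod n). Then the square G² is 4-colorable. -/
open SimpleGraph

/-- The square of a graph: vertices at distance at most 2 are adjacent. -/
def square {V : Type*} (G : SimpleGraph V) : SimpleGraph V where
  Adj u v := u ≠ v ∧ (G.Adj u v ∨ ∃ w, G.Adj u w ∧ G.Adj w v)
  symm := by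
    constructor
    rintro u v ⟨h, h2 | ⟨w, hw1, hw2⟩⟩
    · exact ⟨h.symm, Or.inl h2.symm⟩
    · exact ⟨h.symm, Or.inr ⟨w, hw2.symm, hw1.symm⟩⟩
  loopless := ⟨fun u h => h.1 rfl⟩

/-- The cubic bipartite graph on `{x_i} ⊕ {y_i}`, `i ∈ ZMod n`, with edges
`x_i y_{i-2}`, `x_i y_i`, `x_i y_{i+1}`. -/
def cubicGraphA (n : ℕ) : SimpleGraph (ZMod n ⊕ ZMod n) where
  Adj a b := match a, b with
    | .inl i, .inr j => j = i - 2 ∨ j = i ∨ j = i + 1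
    | .inr j, .inl i => j = i - 2 ∨ j = i ∨ j = i + 1
    | _, _ => False
  symm := by
    constructor
    rintro (i | i) (j | j) h
    · exact h.elim
    · exact h
    · exact h
    · exact h.elim
  loopless := ⟨by rintro (i | i) h <;> exact h⟩

/-- If `4 ∣ n`, the square of the graph is `4`-colorable. -/
theorem stmt1 (n : ℕ) (hn : 0 < n) (h4 : 4 ∣ n) :
    (square (cubicGraphA n)).Colorable 4 := by
  classical
  have C : (square (cubicGraphA n)).Coloring (ZMod 4) := by
    refine Coloring.mk
      (fun v => match v with
        | .inl i => ZMod.castHom h4 (ZMod 4) i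
        | .inr j => ZMod.castHom h4 (ZMod 4) j + 1) ?_
    rintro (i | i) (k | k) ⟨hne, hadj⟩ <;>
      simp only [cubicGraphA] at hadj
    · obtain (h | ⟨(w | w), h1, h2⟩) := hadj
      · exact h.elim
      · exact h1.elim
      · rcases h1 with h1 | h1 | h1 <;> rcases h2 with h2 | h2 | h2 <;>
          first
          | exact absurd (congrArg Sum.inl (show i = k by
              first | linear_combination h1 - h2 | linear_combination h2 - h1)) hne
          | (intro hc
             have a1 := congrArg (ZMod.castHom h4 (ZMod 4)) h1
             have a2 := congrArg (ZMod.castHom h4 (ZMod 4)) h2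
             simp only [map_sub, map_add, map_one, map_ofNat] at a1 a2 hc
             rw [hc] at a1
             have h3 := a1.symm.trans a2
             revert h3
             generalize (ZMod.castHom h4 (ZMod 4)) k = a
             revert a
             decide)
    · obtain (h | ⟨(w | w), h1, h2⟩) := hadj
      · rcases h with h | h | h <;>
          · intro hc
            have a1 := congrArg (ZMod.castHom h4 (ZMod 4)) h
            simp only [map_sub, map_add, map_one, map_ofNat] at a1 hc
            rw [a1] at hc
            revert hc
            generalize (ZMod.castHom h4 (ZMod 4)) i = a
            revert a
            decide
      · exact h1.elim
      · exact h2.elim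
    · obtain (h | ⟨(w | w), h1, h2⟩) := hadj
      · rcases h with h | h | h <;>
          · intro hc
            have a1 := congrArg (ZMod.castHom h4 (ZMod 4)) h
            simp only [map_sub, map_add, map_one, map_ofNat] at a1 hc
            rw [a1] at hc
            revert hc
            generalize (ZMod.castHom h4 (ZMod 4)) k = a
            revert a
            decide
      · exact h2.elim
      · exact h1.elim
    · obtain (h | ⟨(w | w), h1, h2⟩) := hadj
      · exact h.elim
      · rcases h1 with h1 | h1 | h1 <;> rcases h2 with h2 | h2 | h2 <;>
          first
          | exact absurd (congrArg Sum.inr (show i = k by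
              first | linear_combination h1 - h2 | linear_combination h2 - h1)) hne
          | (intro hc
             have a1 := congrArg (ZMod.castHom h4 (ZMod 4)) h1
             have a2 := congrArg (ZMod.castHom h4 (ZMod 4)) h2
             simp only [map_sub, map_add, map_one, map_ofNat] at a1 a2 hc
             rw [show (ZMod.castHom h4 (ZMod 4)) i = (ZMod.castHom h4 (ZMod 4)) k by
                  linear_combination hc] at a1
             have h3 := a1.symm.trans a2
             revert h3
             generalize (ZMod.castHom h4 (ZMod 4)) w = a
             revert a
             decide)
      · exact h2.elim
  have := C.colorable
  rwa [ZMod.card] at this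
end

section
/- Let G = L(S(K₄)) be the line graph of the subdivision of K₄. Then the square G² is not 4-choosable: there exists a list assignment L, with each list of the form {1,2,3,4,5}∖{i} (so of size 4), such that G² admits no proper L-coloring. -/
open SimpleGraph

/-- The line graph of the subdivision of `K_n`: vertices `v_{i,j}` (`i ≠ j`),
with `v_{i,j} ∼ v_{j,i}` and `v_{i,j} ∼ v_{i,j'}`. -/
def LSK (n : ℕ) : SimpleGraph {p : Fin n × Fin n // p.1 ≠ p.2} where
  Adj a b := a ≠ b ∧ ((a.1.1 = b.1.2 ∧ a.1.2 = b.1.1) ∨ a.1.1 = b.1.1)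
  symm := by
    constructor
    rintro a b ⟨hne, ⟨h1, h2⟩ | h1⟩
    · exact ⟨hne.symm, Or.inl ⟨h2.symm, h1.symm⟩⟩
    · exact ⟨hne.symm, Or.inr h1.symm⟩
  loopless := ⟨fun a h => h.1 rfl⟩

abbrev VV := {p : Fin 4 × Fin 4 // p.1 ≠ p.2}

instance : DecidableRel (LSK 4).Adj :=
  fun a b => decidable_of_iff
    (a ≠ b ∧ ((a.1.1 = b.1.2 ∧ a.1.2 = b.1.1) ∨ a.1.1 = b.1.1)) Iff.rfl

instance : DecidableRel (square (LSK 4)).Adj :=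
  fun u v => decidable_of_iff
    (u ≠ v ∧ ((LSK 4).Adj u v ∨ ∃ w, (LSK 4).Adj u w ∧ (LSK 4).Adj w v)) Iff.rfl

/-- The bad list assignment: forbid color `i XOR j` at vertex `v_{i,j}`. -/
def badL (v : VV) : Finset ℕ := ({1, 2, 3, 4, 5} : Finset ℕ).erase (v.1.1.val ^^^ v.1.2.val)

def w10 : VV := ⟨(1,0), by decide⟩
def w01 : VV := ⟨(0,1), by decide⟩
def w20 : VV := ⟨(2,0), by decide⟩
def w02 : VV := ⟨(0,2), by decide⟩
def w21 : VV := ⟨(2,1), by decide⟩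
def w12 : VV := ⟨(1,2), by decide⟩
def w30 : VV := ⟨(3,0), by decide⟩
def w03 : VV := ⟨(0,3), by decide⟩
def w31 : VV := ⟨(3,1), by decide⟩
def w13 : VV := ⟨(1,3), by decide⟩
def w32 : VV := ⟨(3,2), by decide⟩
def w23 : VV := ⟨(2,3), by decide⟩

lemma mem4 (a b c d y : ℕ) (h : y ∈ ({a, b, c, d} : Finset ℕ)) :
    ∃ k : Fin 4, ![a, b, c, d] k = y := by
  simp only [Finset.mem_insert, Finset.mem_singleton] at h
  rcases h with h | h | h | h
  exacts [⟨0, h.symm⟩, ⟨1, h.symm⟩, ⟨2, h.symm⟩, ⟨3, h.symm⟩]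

set_option maxHeartbeats 4000000 in
set_option synthInstance.maxHeartbeats 2000000 in
set_option synthInstance.maxSize 4000 in
theorem key :
    ∀ a10 : Fin 4,
    ∀ a01 : Fin 4,
    (![2,3,4,5] a10 ≠ (![2,3,4,5] a01:ℕ)) →
    ∀ a20 : Fin 4,
    (![2,3,4,5] a01 ≠ (![1,3,4,5] a20:ℕ)) →
    ∀ a02 : Fin 4,
    (![2,3,4,5] a10 ≠ (![1,3,4,5] a02:ℕ)) →
    (![2,3,4,5] a01 ≠ (![1,3,4,5] a02:ℕ)) →
    (![1,3,4,5] a20 ≠ (![1,3,4,5] a02:ℕ)) →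
    ∀ a21 : Fin 4,
    (![2,3,4,5] a10 ≠ (![1,2,4,5] a21:ℕ)) →
    (![1,3,4,5] a20 ≠ (![1,2,4,5] a21:ℕ)) →
    (![1,3,4,5] a02 ≠ (![1,2,4,5] a21:ℕ)) →
    ∀ a12 : Fin 4,
    (![2,3,4,5] a10 ≠ (![1,2,4,5] a12:ℕ)) →
    (![2,3,4,5] a01 ≠ (![1,2,4,5] a12:ℕ)) →
    (![1,3,4,5] a20 ≠ (![1,2,4,5] a12:ℕ)) →
    (![1,2,4,5] a21 ≠ (![1,2,4,5] a12:ℕ)) →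
    ∀ a30 : Fin 4,
    (![2,3,4,5] a01 ≠ (![1,2,4,5] a30:ℕ)) →
    (![1,3,4,5] a02 ≠ (![1,2,4,5] a30:ℕ)) →
    ∀ a03 : Fin 4,
    (![2,3,4,5] a10 ≠ (![1,2,4,5] a03:ℕ)) →
    (![2,3,4,5] a01 ≠ (![1,2,4,5] a03:ℕ)) →
    (![1,3,4,5] a20 ≠ (![1,2,4,5] a03:ℕ)) →
    (![1,3,4,5] a02 ≠ (![1,2,4,5] a03:ℕ)) →
    (![1,2,4,5] a30 ≠ (![1,2,4,5] a03:ℕ)) →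
    ∀ a31 : Fin 4,
    (![2,3,4,5] a10 ≠ (![1,3,4,5] a31:ℕ)) →
    (![1,2,4,5] a12 ≠ (![1,3,4,5] a31:ℕ)) →
    (![1,2,4,5] a30 ≠ (![1,3,4,5] a31:ℕ)) →
    (![1,2,4,5] a03 ≠ (![1,3,4,5] a31:ℕ)) →
    ∀ a13 : Fin 4,
    (![2,3,4,5] a10 ≠ (![1,3,4,5] a13:ℕ)) →
    (![2,3,4,5] a01 ≠ (![1,3,4,5] a13:ℕ)) →
    (![1,2,4,5] a21 ≠ (![1,3,4,5] a13:ℕ)) →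
    (![1,2,4,5] a12 ≠ (![1,3,4,5] a13:ℕ)) →
    (![1,2,4,5] a30 ≠ (![1,3,4,5] a13:ℕ)) →
    (![1,3,4,5] a31 ≠ (![1,3,4,5] a13:ℕ)) →
    ∀ a32 : Fin 4,
    (![1,3,4,5] a20 ≠ (![2,3,4,5] a32:ℕ)) →
    (![1,2,4,5] a21 ≠ (![2,3,4,5] a32:ℕ)) →
    (![1,2,4,5] a30 ≠ (![2,3,4,5] a32:ℕ)) →
    (![1,2,4,5] a03 ≠ (![2,3,4,5] a32:ℕ)) →
    (![1,3,4,5] a31 ≠ (![2,3,4,5] a32:ℕ)) →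
    (![1,3,4,5] a13 ≠ (![2,3,4,5] a32:ℕ)) →
    ∀ a23 : Fin 4,
    (![1,3,4,5] a20 ≠ (![2,3,4,5] a23:ℕ)) →
    (![1,3,4,5] a02 ≠ (![2,3,4,5] a23:ℕ)) →
    (![1,2,4,5] a21 ≠ (![2,3,4,5] a23:ℕ)) →
    (![1,2,4,5] a12 ≠ (![2,3,4,5] a23:ℕ)) →
    (![1,2,4,5] a30 ≠ (![2,3,4,5] a23:ℕ)) →
    (![1,3,4,5] a31 ≠ (![2,3,4,5] a23:ℕ)) →
    (![2,3,4,5] a32 ≠ (![2,3,4,5] a23:ℕ)) →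
    False := by decide

lemma nonex : ¬ ∃ c : VV → ℕ, (∀ v, c v ∈ badL v) ∧
    ∀ ⦃u v⦄, (square (LSK 4)).Adj u v → c u ≠ c v := by
  rintro ⟨c, hmem, hprop⟩
  have A1 : (square (LSK 4)).Adj w10 w01 := by decide
  have A2 : (square (LSK 4)).Adj w01 w20 := by decide
  have A3 : (square (LSK 4)).Adj w10 w02 := by decide
  have A4 : (square (LSK 4)).Adj w01 w02 := by decide
  have A5 : (square (LSK 4)).Adj w20 w02 := by decide
  have A6 : (square (LSK 4)).Adj w10 w21 := by decide
  have A7 : (square (LSK 4)).Adj w20 w21 := by decide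
  have A8 : (square (LSK 4)).Adj w02 w21 := by decide
  have A9 : (square (LSK 4)).Adj w10 w12 := by decide
  have A10 : (square (LSK 4)).Adj w01 w12 := by decide
  have A11 : (square (LSK 4)).Adj w20 w12 := by decide
  have A12 : (square (LSK 4)).Adj w21 w12 := by decide
  have A13 : (square (LSK 4)).Adj w01 w30 := by decide
  have A14 : (square (LSK 4)).Adj w02 w30 := by decide
  have A15 : (square (LSK 4)).Adj w10 w03 := by decide
  have A16 : (square (LSK 4)).Adj w01 w03 := by decide
  have A17 : (square (LSK 4)).Adj w20 w03 := by decide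
  have A18 : (square (LSK 4)).Adj w02 w03 := by decide
  have A19 : (square (LSK 4)).Adj w30 w03 := by decide
  have A20 : (square (LSK 4)).Adj w10 w31 := by decide
  have A21 : (square (LSK 4)).Adj w12 w31 := by decide
  have A22 : (square (LSK 4)).Adj w30 w31 := by decide
  have A23 : (square (LSK 4)).Adj w03 w31 := by decide
  have A24 : (square (LSK 4)).Adj w10 w13 := by decide
  have A25 : (square (LSK 4)).Adj w01 w13 := by decide
  have A26 : (square (LSK 4)).Adj w21 w13 := by decide
  have A27 : (square (LSK 4)).Adj w12 w13 := by decide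
  have A28 : (square (LSK 4)).Adj w30 w13 := by decide
  have A29 : (square (LSK 4)).Adj w31 w13 := by decide
  have A30 : (square (LSK 4)).Adj w20 w32 := by decide
  have A31 : (square (LSK 4)).Adj w21 w32 := by decide
  have A32 : (square (LSK 4)).Adj w30 w32 := by decide
  have A33 : (square (LSK 4)).Adj w03 w32 := by decide
  have A34 : (square (LSK 4)).Adj w31 w32 := by decide
  have A35 : (square (LSK 4)).Adj w13 w32 := by decide
  have A36 : (square (LSK 4)).Adj w20 w23 := by decide
  have A37 : (square (LSK 4)).Adj w02 w23 := by decide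
  have A38 : (square (LSK 4)).Adj w21 w23 := by decide
  have A39 : (square (LSK 4)).Adj w12 w23 := by decide
  have A40 : (square (LSK 4)).Adj w30 w23 := by decide
  have A41 : (square (LSK 4)).Adj w31 w23 := by decide
  have A42 : (square (LSK 4)).Adj w32 w23 := by decide
  have e10 : badL w10 = ({2,3,4,5} : Finset ℕ) := by decide
  obtain ⟨k10, hk10⟩ := mem4 _ _ _ _ _ (e10 ▸ hmem w10)
  have e01 : badL w01 = ({2,3,4,5} : Finset ℕ) := by decide
  obtain ⟨k01, hk01⟩ := mem4 _ _ _ _ _ (e01 ▸ hmem w01)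
  have e20 : badL w20 = ({1,3,4,5} : Finset ℕ) := by decide
  obtain ⟨k20, hk20⟩ := mem4 _ _ _ _ _ (e20 ▸ hmem w20)
  have e02 : badL w02 = ({1,3,4,5} : Finset ℕ) := by decide
  obtain ⟨k02, hk02⟩ := mem4 _ _ _ _ _ (e02 ▸ hmem w02)
  have e21 : badL w21 = ({1,2,4,5} : Finset ℕ) := by decide
  obtain ⟨k21, hk21⟩ := mem4 _ _ _ _ _ (e21 ▸ hmem w21)
  have e12 : badL w12 = ({1,2,4,5} : Finset ℕ) := by decide
  obtain ⟨k12, hk12⟩ := mem4 _ _ _ _ _ (e12 ▸ hmem w12)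
  have e30 : badL w30 = ({1,2,4,5} : Finset ℕ) := by decide
  obtain ⟨k30, hk30⟩ := mem4 _ _ _ _ _ (e30 ▸ hmem w30)
  have e03 : badL w03 = ({1,2,4,5} : Finset ℕ) := by decide
  obtain ⟨k03, hk03⟩ := mem4 _ _ _ _ _ (e03 ▸ hmem w03)
  have e31 : badL w31 = ({1,3,4,5} : Finset ℕ) := by decide
  obtain ⟨k31, hk31⟩ := mem4 _ _ _ _ _ (e31 ▸ hmem w31)
  have e13 : badL w13 = ({1,3,4,5} : Finset ℕ) := by decide
  obtain ⟨k13, hk13⟩ := mem4 _ _ _ _ _ (e13 ▸ hmem w13)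
  have e32 : badL w32 = ({2,3,4,5} : Finset ℕ) := by decide
  obtain ⟨k32, hk32⟩ := mem4 _ _ _ _ _ (e32 ▸ hmem w32)
  have e23 : badL w23 = ({2,3,4,5} : Finset ℕ) := by decide
  obtain ⟨k23, hk23⟩ := mem4 _ _ _ _ _ (e23 ▸ hmem w23)
  exact key k10 k01 (by rw [hk10, hk01]; exact hprop A1) k20 (by rw [hk01, hk20]; exact hprop A2) k02 (by rw [hk10, hk02]; exact hprop A3) (by rw [hk01, hk02]; exact hprop A4) (by rw [hk20, hk02]; exact hprop A5) k21 (by rw [hk10, hk21]; exact hprop A6) (by rw [hk20, hk21]; exact hprop A7) (by rw [hk02, hk21]; exact hprop A8) k12 (by rw [hk10, hk12]; exact hprop A9) (by rw [hk01, hk12]; exact hprop A10) (by rw [hk20, hk12]; exact hprop A11) (by rw [hk21, hk12]; exact hprop A12) k30 (by rw [hk01, hk30]; exact hprop A13) (by rw [hk02, hk30]; exact hprop A14) k03 (by rw [hk10, hk03]; exact hprop A15) (by rw [hk01, hk03]; exact hprop A16) (by rw [hk20, hk03]; exact hprop A17) (by rw [hk02, hk03]; exact hprop A18) (by rw [hk30,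 hk03]; exact hprop A19) k31 (by rw [hk10, hk31]; exact hprop A20) (by rw [hk12, hk31]; exact hprop A21) (by rw [hk30, hk31]; exact hprop A22) (by rw [hk03, hk31]; exact hprop A23) k13 (by rw [hk10, hk13]; exact hprop A24) (by rw [hk01, hk13]; exact hprop A25) (by rw [hk21, hk13]; exact hprop A26) (by rw [hk12, hk13]; exact hprop A27) (by rw [hk30, hk13]; exact hprop A28) (by rw [hk31, hk13]; exact hprop A29) k32 (by rw [hk20, hk32]; exact hprop A30) (by rw [hk21, hk32]; exact hprop A31) (by rw [hk30, hk32]; exact hprop A32) (by rw [hk03, hk32]; exact hprop A33) (by rw [hk31, hk32]; exact hprop A34) (by rw [hk13, hk32]; exact hprop A35) k23 (by rw [hk20, hk23]; exact hprop A36) (by rw [hk02, hk23]; exact hprop A37) (by rw [hk21, hk23]; exact hprop A38) (by rw [hk12, hk23]; exact hprop A39) (by rw [hk30, hk23]; exact hprop A40) (by rw [hk31, hk23]; exact hprop A41) (by rw [hk32, hk23]; exact hprop A42)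

/-- The square of `L(S(K₄))` is not 4-choosable: there is a list assignment with
each list of the form `{1,2,3,4,5} \ {i}` (hence of size 4) from which no proper
coloring of the square exists. -/
theorem stmt6 :
    (∃ L : {p : Fin 4 × Fin 4 // p.1 ≠ p.2} → Finset ℕ,
      (∀ v, ∃ i ∈ ({1, 2, 3, 4, 5} : Finset ℕ),
        L v = ({1, 2, 3, 4, 5} : Finset ℕ).erase i) ∧
      (∀ v, (L v).card = 4) ∧
      ¬ ∃ c : {p : Fin 4 × Fin 4 // p.1 ≠ p.2} → ℕ, (∀ v, c v ∈ L v) ∧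
        ∀ ⦃u v⦄, (square (LSK 4)).Adj u v → c u ≠ c v) ∧
    ¬ ∀ L : {p : Fin 4 × Fin 4 // p.1 ≠ p.2} → Finset ℕ,
        (∀ v, (L v).card = 4) →
        ∃ c : {p : Fin 4 × Fin 4 // p.1 ≠ p.2} → ℕ, (∀ v, c v ∈ L v) ∧
          ∀ ⦃u v⦄, (square (LSK 4)).Adj u v → c u ≠ c v := by
  have hcard : ∀ v, (badL v).card = 4 := by decide
  refine ⟨⟨badL, ?_, hcard, nonex⟩, fun h => nonex (h badL hcard)⟩
  intro v
  exact ⟨v.1.1.val ^^^ v.1.2.val, by revert v; decide, rfl⟩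
end

section
/- Let P = P(n,3) be the generalized Petersen graph with n divisible by 5, and let G = L(P) be its line graph with vertices x_i, y_i, z_i corresponding to edges v_i v_{i+1}, v_i u_i, u_i u_{i+3} respectively. Then χ(G²) = 5, witnessed by coloring x_i, y_{i+3}, z_{i+4} with color r whenever i ≡ r (mod 5), r ∈ {1,...,5}. -/
open SimpleGraph

/-- The line graph of the (multi)graph whose edges are indexed by `E` with
endpoints given by `ends`: two distinct edges are adjacent iff they share an
endpoint. -/
def lineOf {E V : Type*} (ends : E → V × V) : SimpleGraph E where
  Adj a b := a ≠ b ∧ ((ends a).1 = (ends b).1 ∨ (ends a).1 = (ends b).2 ∨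
    (ends a).2 = (ends b).1 ∨ (ends a).2 = (ends b).2)
  symm := by
    constructor
    rintro a b ⟨h, h2 | h2 | h2 | h2⟩
    · exact ⟨h.symm, Or.inl h2.symm⟩
    · exact ⟨h.symm, Or.inr (Or.inr (Or.inl h2.symm))⟩
    · exact ⟨h.symm, Or.inr (Or.inl h2.symm)⟩
    · exact ⟨h.symm, Or.inr (Or.inr (Or.inr h2.symm))⟩
  loopless := ⟨fun a h => h.1 rfl⟩

/-- The endpoints of the edges of the generalized Petersen graph `P(n,k)`:
`x_i = v_i v_{i+1}`, `y_i = v_i u_i`, `z_i = u_i u_{i+k}` (outer vertices `v`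
in the left summand, inner vertices `u` in the right summand). -/
def petersenEnds (n k : ℕ) :
    ZMod n ⊕ ZMod n ⊕ ZMod n → (ZMod n ⊕ ZMod n) × (ZMod n ⊕ ZMod n)
  | .inl i => (.inl i, .inl (i + 1))
  | .inr (.inl i) => (.inl i, .inr i)
  | .inr (.inr i) => (.inr i, .inr (i + (k : ZMod n)))

/-- The line graph of `P(n,k)`. -/
def LP (n k : ℕ) : SimpleGraph (ZMod n ⊕ ZMod n ⊕ ZMod n) :=
  lineOf (petersenEnds n k)

theorem square_adj_iff {V : Type*} (G : SimpleGraph V) (u v : V) :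
    (square G).Adj u v ↔ u ≠ v ∧ (G.Adj u v ∨ ∃ w, G.Adj u w ∧ G.Adj w v) := Iff.rfl

theorem LP_adj_iff (n k : ℕ) (a b : ZMod n ⊕ ZMod n ⊕ ZMod n) :
    (LP n k).Adj a b ↔ a ≠ b ∧ ((petersenEnds n k a).1 = (petersenEnds n k b).1 ∨
      (petersenEnds n k a).1 = (petersenEnds n k b).2 ∨
      (petersenEnds n k a).2 = (petersenEnds n k b).1 ∨
      (petersenEnds n k a).2 = (petersenEnds n k b).2) := Iff.rfl

/-- For `5 ∣ n`, the square of the line graph of `P(n,3)` has chromatic number 5,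
witnessed by coloring `x_i`, `y_{i+3}`, `z_{i+4}` with color `r ≡ i (mod 5)`. -/
theorem stmt9 (n : ℕ) (hn : 0 < n) (h5 : (5 : ℕ) ∣ n) :
    (square (LP n 3)).chromaticNumber = 5 ∧
    (∀ ⦃a b⦄, (square (LP n 3)).Adj a b →
      (fun e => match e with
        | Sum.inl i => ZMod.castHom h5 (ZMod 5) i
        | Sum.inr (Sum.inl i) => ZMod.castHom h5 (ZMod 5) i - 3
        | Sum.inr (Sum.inr i) => ZMod.castHom h5 (ZMod 5) i - 4) a ≠
      (fun e => match e with
        | Sum.inl i => ZMod.castHom h5 (ZMod 5) i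
        | Sum.inr (Sum.inl i) => ZMod.castHom h5 (ZMod 5) i - 3
        | Sum.inr (Sum.inr i) => ZMod.castHom h5 (ZMod 5) i - 4) b) := by
  have hcol : (∀ ⦃a b⦄, (square (LP n 3)).Adj a b →
      (fun e => match e with
        | Sum.inl i => ZMod.castHom h5 (ZMod 5) i
        | Sum.inr (Sum.inl i) => ZMod.castHom h5 (ZMod 5) i - 3
        | Sum.inr (Sum.inr i) => ZMod.castHom h5 (ZMod 5) i - 4) a ≠
      (fun e => match e with
        | Sum.inl i => ZMod.castHom h5 (ZMod 5) i
        | Sum.inr (Sum.inl i) => ZMod.castHom h5 (ZMod 5) i - 3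
        | Sum.inr (Sum.inr i) => ZMod.castHom h5 (ZMod 5) i - 4) b) := by
    intro a b hab
    simp only [square_adj_iff, LP_adj_iff] at hab
    rcases hab with ⟨hne, ⟨-, h⟩ | ⟨w, ⟨-, h1⟩, ⟨-, h2⟩⟩⟩
    · rcases a with i | i | i <;> rcases b with j | j | j <;>
        simp only [petersenEnds, ne_eq, Sum.inl.injEq, Sum.inr.injEq, reduceCtorEq, or_false,
          false_or, Nat.cast_ofNat, add_left_inj, or_self] at h hne ⊢ <;>
        (repeat' rcases h with h | h) <;>
        first
        | exact absurd rfl hne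
        | (try simp only [map_add, map_one, map_ofNat]
           try generalize ZMod.castHom h5 (ZMod 5) i = i'
           try generalize ZMod.castHom h5 (ZMod 5) j = j'
           try revert i'
           try revert j'
           decide)
    · rcases a with i | i | i <;> rcases b with j | j | j <;> rcases w with l | l | l <;>
        simp only [petersenEnds, ne_eq, Sum.inl.injEq, Sum.inr.injEq, reduceCtorEq, or_false,
          false_or, Nat.cast_ofNat, add_left_inj, or_self] at h1 h2 hne ⊢ <;>
        (repeat' rcases h1 with h1 | h1) <;>
        (repeat' rcases h2 with h2 | h2) <;>
        (try simp only [add_left_inj] at h1) <;>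
        (try simp only [add_left_inj] at h2) <;>
        (repeat' rcases h1 with h1 | h1) <;>
        (repeat' rcases h2 with h2 | h2) <;>
        first
        | exact absurd rfl hne
        | (try apply_fun (ZMod.castHom h5 (ZMod 5)) at h1
           try apply_fun (ZMod.castHom h5 (ZMod 5)) at h2
           try simp only [map_add, map_one, map_ofNat] at h1
           try simp only [map_add, map_one, map_ofNat] at h2
           try revert h1
           try revert h2
           try simp only [map_add, map_one, map_ofNat]
           try generalize ZMod.castHom h5 (ZMod 5) i = i'
           try generalize ZMod.castHom h5 (ZMod 5) j = j'
           try generalize ZMod.castHom h5 (ZMod 5) l = l'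
           try revert i'
           try revert j'
           try revert l'
           decide)
  refine ⟨?_, hcol⟩
  set cc : ZMod n ⊕ ZMod n ⊕ ZMod n → ZMod 5 := (fun e => match e with
        | Sum.inl i => ZMod.castHom h5 (ZMod 5) i
        | Sum.inr (Sum.inl i) => ZMod.castHom h5 (ZMod 5) i - 3
        | Sum.inr (Sum.inr i) => ZMod.castHom h5 (ZMod 5) i - 4) with hcc
  have key : ∀ u v : ZMod n ⊕ ZMod n ⊕ ZMod n, cc u ≠ cc v → u ≠ v :=
    fun u v h e => h (congrArg cc e)
  have hC : ∀ i : ZMod n, cc (Sum.inl i) = ZMod.castHom h5 (ZMod 5) i := fun _ => rfl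
  have hD : ∀ i : ZMod n, cc (Sum.inr (Sum.inl i)) = ZMod.castHom h5 (ZMod 5) i - 3 :=
    fun _ => rfl
  apply le_antisymm
  · have : Fintype.card (ZMod 5) = 5 := rfl
    calc (square (LP n 3)).chromaticNumber ≤ (Fintype.card (ZMod 5) : ℕ∞) :=
          (Coloring.mk cc (fun {a b} h => hcol h)).colorable.chromaticNumber_le
      _ = 5 := by rw [this]; rfl
  · have clique : (square (LP n 3)).IsClique
        {Sum.inl (-1), Sum.inl 0, Sum.inl 1, Sum.inr (Sum.inl 0), Sum.inr (Sum.inl 1)} := by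
      have A1 : (LP n 3).Adj (.inl (-1)) (.inl 0) :=
        (LP_adj_iff _ _ _ _).2
        ⟨key _ _ (by simp [hC, map_neg, map_one, map_zero]; decide),
          Or.inr (Or.inr (Or.inl (congrArg Sum.inl (neg_add_cancel 1))))⟩
      have A2 : (LP n 3).Adj (.inl 0) (.inl 1) :=
        (LP_adj_iff _ _ _ _).2
        ⟨key _ _ (by simp [hC, map_one, map_zero]; decide),
          Or.inr (Or.inr (Or.inl (congrArg Sum.inl (zero_add 1))))⟩
      have A3 : (LP n 3).Adj (.inl (-1)) (.inr (.inl 0)) :=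
        (LP_adj_iff _ _ _ _).2
        ⟨key _ _ (by simp [hC, hD, map_neg, map_one, map_zero]; decide),
          Or.inr (Or.inr (Or.inl (congrArg Sum.inl (neg_add_cancel 1))))⟩
      have A4 : (LP n 3).Adj (.inl 0) (.inr (.inl 0)) :=
        (LP_adj_iff _ _ _ _).2
        ⟨key _ _ (by simp [hC, hD, map_zero]; decide), Or.inl rfl⟩
      have A5 : (LP n 3).Adj (.inl 0) (.inr (.inl 1)) :=
        (LP_adj_iff _ _ _ _).2
        ⟨key _ _ (by simp [hC, hD, map_one, map_zero]; decide),
          Or.inr (Or.inr (Or.inl (congrArg Sum.inl (zero_add 1))))⟩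
      have A6 : (LP n 3).Adj (.inl 1) (.inr (.inl 1)) :=
        (LP_adj_iff _ _ _ _).2
        ⟨key _ _ (by simp [hC, hD, map_one]; decide), Or.inl rfl⟩
      have S : ∀ u v : ZMod n ⊕ ZMod n ⊕ ZMod n, (LP n 3).Adj u v → (square (LP n 3)).Adj u v :=
        fun u v h => (square_adj_iff _ _ _).2 ⟨h.1, Or.inl h⟩
      have T : ∀ u v w, (LP n 3).Adj u w → (LP n 3).Adj w v → cc u ≠ cc v →
          (square (LP n 3)).Adj u v :=
        fun u v w h1 h2 hne => (square_adj_iff _ _ _).2 ⟨key _ _ hne, Or.inr ⟨w, h1, h2⟩⟩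
      have B1 : (square (LP n 3)).Adj (.inl (-1)) (.inl 1) :=
        T _ _ _ A1 A2 (by simp [hC, map_neg, map_one]; decide)
      have B2 : (square (LP n 3)).Adj (.inl (-1)) (.inr (.inl 1)) :=
        T _ _ _ A1 A5 (by simp [hC, hD, map_neg, map_one]; decide)
      have B3 : (square (LP n 3)).Adj (.inl 1) (.inr (.inl 0)) :=
        T _ _ _ (A2.symm) A4 (by simp [hC, hD, map_one, map_zero]; decide)
      have B4 : (square (LP n 3)).Adj (.inr (.inl 0)) (.inr (.inl 1)) :=
        T _ _ _ (A4.symm) A5 (by simp [hD, map_zero, map_one]; decide)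
      intro u hu v hv huv
      simp only [Set.mem_insert_iff, Set.mem_singleton_iff] at hu hv
      rcases hu with rfl|rfl|rfl|rfl|rfl <;> rcases hv with rfl|rfl|rfl|rfl|rfl <;>
        first
        | exact absurd rfl huv
        | exact S _ _ A1 | exact S _ _ A2 | exact S _ _ A3 | exact S _ _ A4
        | exact S _ _ A5 | exact S _ _ A6
        | exact S _ _ A1.symm | exact S _ _ A2.symm | exact S _ _ A3.symm
        | exact S _ _ A4.symm | exact S _ _ A5.symm | exact S _ _ A6.symm
        | exact B1 | exact B2 | exact B3 | exact B4
        | exact B1.symm | exact B2.symm | exact B3.symm | exact B4.symm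
    have hcard : ({Sum.inl (-1), Sum.inl 0, Sum.inl 1, Sum.inr (Sum.inl 0), Sum.inr (Sum.inl 1)} :
        Finset (ZMod n ⊕ ZMod n ⊕ ZMod n)).card = 5 := by
      have d1 : (Sum.inl (-1) : ZMod n ⊕ ZMod n ⊕ ZMod n) ≠ Sum.inl 0 :=
        key _ _ (by simp [hC, map_neg, map_one, map_zero]; decide)
      have d2 : (Sum.inl (-1) : ZMod n ⊕ ZMod n ⊕ ZMod n) ≠ Sum.inl 1 :=
        key _ _ (by simp [hC, map_neg, map_one]; decide)
      have d3 : (Sum.inl (-1) : ZMod n ⊕ ZMod n ⊕ ZMod n) ≠ Sum.inr (Sum.inl 0) :=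
        key _ _ (by simp [hC, hD, map_neg, map_one, map_zero]; decide)
      have d4 : (Sum.inl (-1) : ZMod n ⊕ ZMod n ⊕ ZMod n) ≠ Sum.inr (Sum.inl 1) :=
        key _ _ (by simp [hC, hD, map_neg, map_one]; decide)
      have d5 : (Sum.inl 0 : ZMod n ⊕ ZMod n ⊕ ZMod n) ≠ Sum.inl 1 :=
        key _ _ (by simp [hC, map_one, map_zero]; decide)
      have d6 : (Sum.inl 0 : ZMod n ⊕ ZMod n ⊕ ZMod n) ≠ Sum.inr (Sum.inl 0) :=
        key _ _ (by simp [hC, hD, map_zero]; decide)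
      have d7 : (Sum.inl 0 : ZMod n ⊕ ZMod n ⊕ ZMod n) ≠ Sum.inr (Sum.inl 1) :=
        key _ _ (by simp [hC, hD, map_one, map_zero]; decide)
      have d8 : (Sum.inl 1 : ZMod n ⊕ ZMod n ⊕ ZMod n) ≠ Sum.inr (Sum.inl 0) :=
        key _ _ (by simp [hC, hD, map_one, map_zero]; decide)
      have d9 : (Sum.inl 1 : ZMod n ⊕ ZMod n ⊕ ZMod n) ≠ Sum.inr (Sum.inl 1) :=
        key _ _ (by simp [hC, hD, map_one]; decide)
      have d10 : (Sum.inr (Sum.inl 0) : ZMod n ⊕ ZMod n ⊕ ZMod n) ≠ Sum.inr (Sum.inl 1) :=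
        key _ _ (by simp [hD, map_one, map_zero]; decide)
      rw [Finset.card_insert_of_notMem (by simp [d1, d2, d3, d4]),
        Finset.card_insert_of_notMem (by simp [d5, d6, d7]),
        Finset.card_insert_of_notMem (by simp [d8, d9]),
        Finset.card_insert_of_notMem (by simp [d10]), Finset.card_singleton]
    have hle := IsClique.card_le_chromaticNumber (s :=
      ({Sum.inl (-1), Sum.inl 0, Sum.inl 1, Sum.inr (Sum.inl 0), Sum.inr (Sum.inl 1)} :
        Finset (ZMod n ⊕ ZMod n ⊕ ZMod n))) (by simpa using clique)
    rw [hcard] at hle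
    exact_mod_cast hle
end

section
/- Let P = P(n,2) be the generalized Petersen graph with n divisible by 5, and let G = L(P) be its line graph with vertices x_i, y_i, z_i corresponding to edges v_i v_{i+1}, v_i u_i, u_i u_{i+2}. Then χ(G²) = 5, witnessed by coloring x_i, y_{i+3}, z_{i+2} with color r whenever i ≡ r (mod 5). -/
open SimpleGraph

set_option linter.unreachableTactic false
set_option linter.unusedTactic false
set_option linter.unusedVariables false

def col (n : ℕ) (h5 : (5:ℕ) ∣ n) : ZMod n ⊕ ZMod n ⊕ ZMod n → ZMod 5
  | Sum.inl i => ZMod.castHom h5 (ZMod 5) i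
  | Sum.inr (Sum.inl i) => ZMod.castHom h5 (ZMod 5) i - 3
  | Sum.inr (Sum.inr i) => ZMod.castHom h5 (ZMod 5) i - 2

set_option maxHeartbeats 1000000 in
lemma proper (n : ℕ) (h5 : (5:ℕ) ∣ n) :
    ∀ ⦃a b⦄, (square (LP n 2)).Adj a b → col n h5 a ≠ col n h5 b := by
  rintro a b ⟨hne, h⟩ hc
  rcases a with i | i | i <;> rcases b with j | j | j <;>
    simp only [LP, lineOf, petersenEnds, square, ne_eq, Sum.inl.injEq, Sum.inr.injEq,
      Sum.exists, reduceCtorEq, false_or, or_false, not_false_eq_true, true_and, and_true,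
      false_and, and_false, exists_false, or_self, col] at h hne hc
  · rcases h with ⟨hn1, (h1|h1|h1|h1)⟩ | ⟨m, ⟨hn1, (h1|h1|h1|h1)⟩, hn2, (h2|h2|h2|h2)⟩ |
      ⟨m, (h1|h1), (h2|h2)⟩ <;> (first
    | exact hne h1
    | exact hn1 h1
    | exact hn2 h2
    | exact hne (by linear_combination h1)
    | exact hne (by linear_combination -h1)
    | exact hne (by linear_combination h1 + h2)
    | exact hne (by linear_combination h1 - h2)
    | exact hne (by linear_combination h2 - h1)
    | exact hne (by linear_combination -h1 - h2)
    | exact hn1 (by linear_combination h1)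
    | exact hn2 (by linear_combination h2)
    | (apply_fun (ZMod.castHom h5 (ZMod 5)) at h1
       try apply_fun (ZMod.castHom h5 (ZMod 5)) at h2
       try simp only [map_add, map_one, map_natCast, map_ofNat] at h1 hc
       try simp only [map_add, map_one, map_natCast, map_ofNat] at h2
       try generalize ZMod.castHom h5 (ZMod 5) i = p at *
       try generalize ZMod.castHom h5 (ZMod 5) j = q at *
       try generalize ZMod.castHom h5 (ZMod 5) m = r at *
       first
       | (revert p q r; decide)
       | (revert p q; decide)))
  · rcases h with (h1|h1) | ⟨m, ⟨hn1, (h1|h1|h1|h1)⟩, (h2|h2)⟩ | ⟨m, (h1|h1), hn2, h2⟩ <;> (first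
    | exact hne h1
    | exact hn1 h1
    | exact hn2 h2
    | exact hne (by linear_combination h1)
    | exact hne (by linear_combination -h1)
    | exact hne (by linear_combination h1 + h2)
    | exact hne (by linear_combination h1 - h2)
    | exact hne (by linear_combination h2 - h1)
    | exact hne (by linear_combination -h1 - h2)
    | exact hn1 (by linear_combination h1)
    | exact hn2 (by linear_combination h2)
    | (apply_fun (ZMod.castHom h5 (ZMod 5)) at h1
       try apply_fun (ZMod.castHom h5 (ZMod 5)) at h2
       try simp only [map_add, map_one, map_natCast, map_ofNat] at h1 hc
       try simp only [map_add, map_one, map_natCast, map_ofNat] at h2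
       try generalize ZMod.castHom h5 (ZMod 5) i = p at *
       try generalize ZMod.castHom h5 (ZMod 5) j = q at *
       try generalize ZMod.castHom h5 (ZMod 5) m = r at *
       first
       | (revert p q r; decide)
       | (revert p q; decide)))
  · rcases h with ⟨m, (h1|h1), (h2|h2)⟩ <;> (first
    | exact hne h1
    | exact hn1 h1
    | exact hn2 h2
    | exact hne (by linear_combination h1)
    | exact hne (by linear_combination -h1)
    | exact hne (by linear_combination h1 + h2)
    | exact hne (by linear_combination h1 - h2)
    | exact hne (by linear_combination h2 - h1)
    | exact hne (by linear_combination -h1 - h2)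
    | exact hn1 (by linear_combination h1)
    | exact hn2 (by linear_combination h2)
    | (apply_fun (ZMod.castHom h5 (ZMod 5)) at h1
       try apply_fun (ZMod.castHom h5 (ZMod 5)) at h2
       try simp only [map_add, map_one, map_natCast, map_ofNat] at h1 hc
       try simp only [map_add, map_one, map_natCast, map_ofNat] at h2
       try generalize ZMod.castHom h5 (ZMod 5) i = p at *
       try generalize ZMod.castHom h5 (ZMod 5) j = q at *
       try generalize ZMod.castHom h5 (ZMod 5) m = r at *
       first
       | (revert p q r; decide)
       | (revert p q; decide)))
  · rcases h with (h1|h1) | ⟨m, (h1|h1), hn2, (h2|h2|h2|h2)⟩ | ⟨m, ⟨hn1, h1⟩, (h2|h2)⟩ <;> (first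
    | exact hne h1
    | exact hn1 h1
    | exact hn2 h2
    | exact hne (by linear_combination h1)
    | exact hne (by linear_combination -h1)
    | exact hne (by linear_combination h1 + h2)
    | exact hne (by linear_combination h1 - h2)
    | exact hne (by linear_combination h2 - h1)
    | exact hne (by linear_combination -h1 - h2)
    | exact hn1 (by linear_combination h1)
    | exact hn2 (by linear_combination h2)
    | (apply_fun (ZMod.castHom h5 (ZMod 5)) at h1
       try apply_fun (ZMod.castHom h5 (ZMod 5)) at h2
       try simp only [map_add, map_one, map_natCast, map_ofNat] at h1 hc
       try simp only [map_add, map_one, map_natCast, map_ofNat] at h2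
       try generalize ZMod.castHom h5 (ZMod 5) i = p at *
       try generalize ZMod.castHom h5 (ZMod 5) j = q at *
       try generalize ZMod.castHom h5 (ZMod 5) m = r at *
       first
       | (revert p q r; decide)
       | (revert p q; decide)))
  · rcases h with ⟨hn1, h1⟩ | ⟨m, (h1|h1), (h2|h2)⟩ | ⟨m, ⟨hn1, h1⟩, hn2, h2⟩ |
      ⟨m, (h1|h1), (h2|h2)⟩ <;> (first
    | exact hne h1
    | exact hn1 h1
    | exact hn2 h2
    | exact hne (by linear_combination h1)
    | exact hne (by linear_combination -h1)
    | exact hne (by linear_combination h1 + h2)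
    | exact hne (by linear_combination h1 - h2)
    | exact hne (by linear_combination h2 - h1)
    | exact hne (by linear_combination -h1 - h2)
    | exact hn1 (by linear_combination h1)
    | exact hn2 (by linear_combination h2)
    | (apply_fun (ZMod.castHom h5 (ZMod 5)) at h1
       try apply_fun (ZMod.castHom h5 (ZMod 5)) at h2
       try simp only [map_add, map_one, map_natCast, map_ofNat] at h1 hc
       try simp only [map_add, map_one, map_natCast, map_ofNat] at h2
       try generalize ZMod.castHom h5 (ZMod 5) i = p at *
       try generalize ZMod.castHom h5 (ZMod 5) j = q at *
       try generalize ZMod.castHom h5 (ZMod 5) m = r at *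
       first
       | (revert p q r; decide)
       | (revert p q; decide)))
  · rcases h with (h1|h1) | ⟨m, ⟨hn1, h1⟩, (h2|h2)⟩ | ⟨m, (h1|h1), hn2, (h2|h2|h2|h2)⟩ <;> (first
    | exact hne h1
    | exact hn1 h1
    | exact hn2 h2
    | exact hne (by linear_combination h1)
    | exact hne (by linear_combination -h1)
    | exact hne (by linear_combination h1 + h2)
    | exact hne (by linear_combination h1 - h2)
    | exact hne (by linear_combination h2 - h1)
    | exact hne (by linear_combination -h1 - h2)
    | exact hn1 (by linear_combination h1)
    | exact hn2 (by linear_combination h2)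
    | (apply_fun (ZMod.castHom h5 (ZMod 5)) at h1
       try apply_fun (ZMod.castHom h5 (ZMod 5)) at h2
       try simp only [map_add, map_one, map_natCast, map_ofNat] at h1 hc
       try simp only [map_add, map_one, map_natCast, map_ofNat] at h2
       try generalize ZMod.castHom h5 (ZMod 5) i = p at *
       try generalize ZMod.castHom h5 (ZMod 5) j = q at *
       try generalize ZMod.castHom h5 (ZMod 5) m = r at *
       first
       | (revert p q r; decide)
       | (revert p q; decide)))
  · rcases h with ⟨m, (h1|h1), (h2|h2)⟩ <;> (first
    | exact hne h1
    | exact hn1 h1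
    | exact hn2 h2
    | exact hne (by linear_combination h1)
    | exact hne (by linear_combination -h1)
    | exact hne (by linear_combination h1 + h2)
    | exact hne (by linear_combination h1 - h2)
    | exact hne (by linear_combination h2 - h1)
    | exact hne (by linear_combination -h1 - h2)
    | exact hn1 (by linear_combination h1)
    | exact hn2 (by linear_combination h2)
    | (apply_fun (ZMod.castHom h5 (ZMod 5)) at h1
       try apply_fun (ZMod.castHom h5 (ZMod 5)) at h2
       try simp only [map_add, map_one, map_natCast, map_ofNat] at h1 hc
       try simp only [map_add, map_one, map_natCast, map_ofNat] at h2
       try generalize ZMod.castHom h5 (ZMod 5) i = p at *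
       try generalize ZMod.castHom h5 (ZMod 5) j = q at *
       try generalize ZMod.castHom h5 (ZMod 5) m = r at *
       first
       | (revert p q r; decide)
       | (revert p q; decide)))
  · rcases h with (h1|h1) | ⟨m, (h1|h1), hn2, h2⟩ | ⟨m, ⟨hn1, (h1|h1|h1|h1)⟩, (h2|h2)⟩ <;> (first
    | exact hne h1
    | exact hn1 h1
    | exact hn2 h2
    | exact hne (by linear_combination h1)
    | exact hne (by linear_combination -h1)
    | exact hne (by linear_combination h1 + h2)
    | exact hne (by linear_combination h1 - h2)
    | exact hne (by linear_combination h2 - h1)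
    | exact hne (by linear_combination -h1 - h2)
    | exact hn1 (by linear_combination h1)
    | exact hn2 (by linear_combination h2)
    | (apply_fun (ZMod.castHom h5 (ZMod 5)) at h1
       try apply_fun (ZMod.castHom h5 (ZMod 5)) at h2
       try simp only [map_add, map_one, map_natCast, map_ofNat] at h1 hc
       try simp only [map_add, map_one, map_natCast, map_ofNat] at h2
       try generalize ZMod.castHom h5 (ZMod 5) i = p at *
       try generalize ZMod.castHom h5 (ZMod 5) j = q at *
       try generalize ZMod.castHom h5 (ZMod 5) m = r at *
       first
       | (revert p q r; decide)
       | (revert p q; decide)))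
  · rcases h with ⟨hn1, (h1|h1|h1|h1)⟩ | ⟨m, (h1|h1), (h2|h2)⟩ |
      ⟨m, ⟨hn1, (h1|h1|h1|h1)⟩, hn2, (h2|h2|h2|h2)⟩ <;> (first
    | exact hne h1
    | exact hn1 h1
    | exact hn2 h2
    | exact hne (by linear_combination h1)
    | exact hne (by linear_combination -h1)
    | exact hne (by linear_combination h1 + h2)
    | exact hne (by linear_combination h1 - h2)
    | exact hne (by linear_combination h2 - h1)
    | exact hne (by linear_combination -h1 - h2)
    | exact hn1 (by linear_combination h1)
    | exact hn2 (by linear_combination h2)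
    | (apply_fun (ZMod.castHom h5 (ZMod 5)) at h1
       try apply_fun (ZMod.castHom h5 (ZMod 5)) at h2
       try simp only [map_add, map_one, map_natCast, map_ofNat] at h1 hc
       try simp only [map_add, map_one, map_natCast, map_ofNat] at h2
       try generalize ZMod.castHom h5 (ZMod 5) i = p at *
       try generalize ZMod.castHom h5 (ZMod 5) j = q at *
       try generalize ZMod.castHom h5 (ZMod 5) m = r at *
       first
       | (revert p q r; decide)
       | (revert p q; decide)))

lemma chrom5 (n : ℕ) (h5 : (5:ℕ) ∣ n) :
    (square (LP n 2)).chromaticNumber = 5 := by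
  have key : ∀ i j : ZMod n, ZMod.castHom h5 (ZMod 5) i ≠ ZMod.castHom h5 (ZMod 5) j → i ≠ j :=
    fun i j h e => h (by rw [e])
  have hm10 : (-1 : ZMod n) ≠ 0 := key _ _ (by simp only [map_neg, map_one, map_zero]; decide)
  have hm11 : (-1 : ZMod n) ≠ 1 := key _ _ (by simp only [map_neg, map_one, map_zero]; decide)
  have h01 : (0 : ZMod n) ≠ 1 := key _ _ (by simp only [map_neg, map_one, map_zero]; decide)
  -- the 5-clique
  set A : ZMod n ⊕ ZMod n ⊕ ZMod n := Sum.inl (-1) with hA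
  set B : ZMod n ⊕ ZMod n ⊕ ZMod n := Sum.inl 0 with hB
  set C : ZMod n ⊕ ZMod n ⊕ ZMod n := Sum.inl 1 with hC
  set D : ZMod n ⊕ ZMod n ⊕ ZMod n := Sum.inr (Sum.inl 0) with hD
  set E : ZMod n ⊕ ZMod n ⊕ ZMod n := Sum.inr (Sum.inl 1) with hE
  have hAB : A ≠ B := by simp [hA, hB, hm10]
  have hAC : A ≠ C := by simp [hA, hC, hm11]
  have hBC : B ≠ C := by simp [hB, hC, h01]
  have hDE : D ≠ E := by simp [hD, hE, h01]
  have clique : (square (LP n 2)).IsClique {A, B, C, D, E} := by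
    intro u hu v hv huv
    have adjBA : (LP n 2).Adj B A := by
      refine ⟨hAB.symm, ?_⟩
      simp [hA, hB, LP, lineOf, petersenEnds]
    have adjBC : (LP n 2).Adj B C := by
      refine ⟨hBC, ?_⟩
      simp [hB, hC, LP, lineOf, petersenEnds]
    have adjBD : (LP n 2).Adj B D := by
      refine ⟨by simp [hB, hD], ?_⟩
      simp [hB, hD, LP, lineOf, petersenEnds]
    have adjBE : (LP n 2).Adj B E := by
      refine ⟨by simp [hB, hE], ?_⟩
      simp [hB, hE, LP, lineOf, petersenEnds]
    have adjAD : (LP n 2).Adj A D := by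
      refine ⟨by simp [hA, hD], ?_⟩
      simp [hA, hD, LP, lineOf, petersenEnds]
    have adjCE : (LP n 2).Adj C E := by
      refine ⟨by simp [hC, hE], ?_⟩
      simp [hC, hE, LP, lineOf, petersenEnds]
    simp only [Set.mem_insert_iff, Set.mem_singleton_iff] at hu hv
    rcases hu with rfl|rfl|rfl|rfl|rfl <;> rcases hv with rfl|rfl|rfl|rfl|rfl <;>
      first
      | exact absurd rfl huv
      | exact ⟨huv, Or.inl adjBA.symm⟩
      | exact ⟨huv, Or.inl adjBA⟩
      | exact ⟨huv, Or.inl adjBC⟩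
      | exact ⟨huv, Or.inl adjBC.symm⟩
      | exact ⟨huv, Or.inl adjBD⟩
      | exact ⟨huv, Or.inl adjBD.symm⟩
      | exact ⟨huv, Or.inl adjBE⟩
      | exact ⟨huv, Or.inl adjBE.symm⟩
      | exact ⟨huv, Or.inl adjAD⟩
      | exact ⟨huv, Or.inl adjAD.symm⟩

      | exact ⟨huv, Or.inl adjCE⟩
      | exact ⟨huv, Or.inl adjCE.symm⟩

      | exact ⟨huv, Or.inr ⟨B, adjBA.symm, adjBC⟩⟩
      | exact ⟨huv, Or.inr ⟨B, adjBC.symm, adjBA⟩⟩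
      | exact ⟨huv, Or.inr ⟨B, adjBD.symm, adjBE⟩⟩
      | exact ⟨huv, Or.inr ⟨B, adjBE.symm, adjBD⟩⟩
      | exact ⟨huv, Or.inr ⟨B, adjBA.symm, adjBE⟩⟩
      | exact ⟨huv, Or.inr ⟨B, adjBE.symm, adjBA⟩⟩
      | exact ⟨huv, Or.inr ⟨B, adjBC.symm, adjBD⟩⟩
      | exact ⟨huv, Or.inr ⟨B, adjBD.symm, adjBC⟩⟩
  have hfin : ({A, B, C, D, E} : Finset (ZMod n ⊕ ZMod n ⊕ ZMod n)).card = 5 := by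
    rw [Finset.card_insert_of_notMem (by simp [hA, hB, hC, hD, hE, hm10, hm11]),
      Finset.card_insert_of_notMem (by simp [hB, hC, hD, hE, h01]),
      Finset.card_insert_of_notMem (by simp [hC, hD, hE]),
      Finset.card_insert_of_notMem (by simp [hD, hE, h01]), Finset.card_singleton]
  have hclique : (square (LP n 2)).IsClique (({A, B, C, D, E} : Finset _) : Set _) := by
    convert clique using 1; simp
  have lower := hclique.card_le_chromaticNumber
  rw [hfin] at lower
  have upper : (square (LP n 2)).chromaticNumber ≤ 5 := by
    have : (square (LP n 2)).Colorable 5 := by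
      have Co : (square (LP n 2)).Coloring (ZMod 5) := Coloring.mk (col n h5) (fun hab => proper n h5 hab)
      simpa using Co.colorable
    exact_mod_cast this.chromaticNumber_le
  exact le_antisymm upper (by exact_mod_cast lower)

/-- For `5 ∣ n`, the square of the line graph of `P(n,2)` has chromatic number 5,
witnessed by coloring `x_i`, `y_{i+3}`, `z_{i+2}` with color `r ≡ i (mod 5)`. -/
theorem stmt10 (n : ℕ) (hn : 0 < n) (h5 : (5 : ℕ) ∣ n) :
    (square (LP n 2)).chromaticNumber = 5 ∧
    (∀ ⦃a b⦄, (square (LP n 2)).Adj a b →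
      (fun e => match e with
        | Sum.inl i => ZMod.castHom h5 (ZMod 5) i
        | Sum.inr (Sum.inl i) => ZMod.castHom h5 (ZMod 5) i - 3
        | Sum.inr (Sum.inr i) => ZMod.castHom h5 (ZMod 5) i - 2) a ≠
      (fun e => match e with
        | Sum.inl i => ZMod.castHom h5 (ZMod 5) i
        | Sum.inr (Sum.inl i) => ZMod.castHom h5 (ZMod 5) i - 3
        | Sum.inr (Sum.inr i) => ZMod.castHom h5 (ZMod 5) i - 2) b) := by
  constructor
  · exact chrom5 n h5
  · intro a b hab
    exact proper n h5 hab
end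

section
/- For every integer k ≥ 3 there exists a (2k−2)-regular graph G with chromatic number χ(G) = k = (1/2)Δ(G) + 1 which is not k-choosable, i.e., χ_ℓ(G) > χ(G). -/
open SimpleGraph

/-- `G` is `k`-choosable: for every assignment of lists of size `k` there is a
proper coloring choosing each vertex's color from its list. -/
def Choosable {V : Type*} (G : SimpleGraph V) (k : ℕ) : Prop :=
  ∀ L : V → Finset ℤ, (∀ v, (L v).card = k) →
    ∃ c : V → ℤ, (∀ v, c v ∈ L v) ∧ ∀ ⦃u v⦄, G.Adj u v → c u ≠ c v

namespace Stmt12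

variable (k : ℕ)

abbrev Vt := Fin (k - 1) ⊕ (Fin k ⊕ (Fin k ⊕ Fin (k - 1)))

def relB : Vt k → Vt k → Bool
  | Sum.inl _, Sum.inl _ => true
  | Sum.inl _, Sum.inr (Sum.inl _) => true
  | Sum.inr (Sum.inl i), Sum.inr (Sum.inr (Sum.inl j)) => i ≠ j
  | Sum.inr (Sum.inr (Sum.inl _)), Sum.inr (Sum.inr (Sum.inr _)) => true
  | Sum.inr (Sum.inr (Sum.inr _)), Sum.inr (Sum.inr (Sum.inr _)) => true
  | _, _ => false

def G : SimpleGraph (Vt k) := SimpleGraph.fromRel (fun u v => relB k u v)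

lemma G_adj (u v : Vt k) : (G k).Adj u v ↔ u ≠ v ∧ (relB k u v ∨ relB k v u) :=
  SimpleGraph.fromRel_adj _ u v

instance : DecidableRel (G k).Adj := fun u v =>
  decidable_of_iff' _ (G_adj k u v)

def eX : Fin (k - 1) ↪ Vt k := ⟨fun i => Sum.inl i, fun _ _ h => by simpa using h⟩
def eX' : Fin k ↪ Vt k := ⟨fun i => Sum.inr (Sum.inl i), fun _ _ h => by simpa using h⟩
def eY' : Fin k ↪ Vt k := ⟨fun i => Sum.inr (Sum.inr (Sum.inl i)), fun _ _ h => by simpa using h⟩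
def eY : Fin (k - 1) ↪ Vt k := ⟨fun i => Sum.inr (Sum.inr (Sum.inr i)), fun _ _ h => by simpa using h⟩

end Stmt12

open Stmt12 Finset

/-- For every `k ≥ 3` there is a `(2k-2)`-regular graph with chromatic number
`k = Δ/2 + 1` which is not `k`-choosable. -/
theorem stmt12 (k : ℕ) (hk : 3 ≤ k) :
    ∃ (V : Type) (_ : Fintype V) (G : SimpleGraph V),
      (∀ v : V, (G.neighborSet v).ncard = 2 * k - 2) ∧
      G.chromaticNumber = k ∧ ¬ Choosable G k := by
  refine ⟨Vt k, inferInstance, G k, ?_, ?_, ?_⟩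
  · -- regularity
    intro v
    have hcard : ∀ (A : Finset (Fin (k-1))) (B : Finset (Fin k)),
        ((A.map (eX k)) ∪ (B.map (eX' k))).card = A.card + B.card := by
      intro A B
      rw [Finset.card_union_of_disjoint, Finset.card_map, Finset.card_map]
      simp [Finset.disjoint_left, eX, eX']
    rcases v with i | i | i | i
    · have h : ((G k).neighborSet (Sum.inl i)).toFinset
          = ((univ.erase i).map (eX k)) ∪ (univ.map (eX' k)) := by
        ext u
        rcases u with a | a | a | a <;>
          simp [Stmt12.G_adj, relB, eX, eX', eY', eY, ne_comm, DFunLike.coe, eq_comm]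
      rw [Set.ncard_eq_toFinset_card', h, Finset.card_union_of_disjoint, Finset.card_map,
        Finset.card_map, Finset.card_erase_of_mem (Finset.mem_univ _), Finset.card_univ,
        Finset.card_univ, Fintype.card_fin, Fintype.card_fin]
      · omega
      · simp [Finset.disjoint_left, eX, eX']
    · have h : ((G k).neighborSet (Sum.inr (Sum.inl i))).toFinset
          = (univ.map (eX k)) ∪ ((univ.erase i).map (eY' k)) := by
        ext u
        rcases u with a | a | a | a <;>
          simp [Stmt12.G_adj, relB, eX, eX', eY', eY, ne_comm] <;> simp [DFunLike.coe, eq_comm]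
      rw [Set.ncard_eq_toFinset_card', h, Finset.card_union_of_disjoint, Finset.card_map,
        Finset.card_map, Finset.card_erase_of_mem (Finset.mem_univ _), Finset.card_univ,
        Finset.card_univ, Fintype.card_fin, Fintype.card_fin]
      · omega
      · simp [Finset.disjoint_left, eX, eY']
    · have h : ((G k).neighborSet (Sum.inr (Sum.inr (Sum.inl i)))).toFinset
          = ((univ.erase i).map (eX' k)) ∪ (univ.map (eY k)) := by
        ext u
        rcases u with a | a | a | a <;>
          simp [Stmt12.G_adj, relB, eX, eX', eY', eY, ne_comm] <;> simp [DFunLike.coe, eq_comm]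
      rw [Set.ncard_eq_toFinset_card', h, Finset.card_union_of_disjoint, Finset.card_map,
        Finset.card_map, Finset.card_erase_of_mem (Finset.mem_univ _), Finset.card_univ,
        Finset.card_univ, Fintype.card_fin, Fintype.card_fin]
      · omega
      · simp [Finset.disjoint_left, eX', eY, DFunLike.coe]
    · have h : ((G k).neighborSet (Sum.inr (Sum.inr (Sum.inr i)))).toFinset
          = (univ.map (eY' k)) ∪ ((univ.erase i).map (eY k)) := by
        ext u
        rcases u with a | a | a | a <;>
          simp [Stmt12.G_adj, relB, eX, eX', eY', eY, ne_comm, DFunLike.coe, eq_comm]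
      rw [Set.ncard_eq_toFinset_card', h, Finset.card_union_of_disjoint, Finset.card_map,
        Finset.card_map, Finset.card_erase_of_mem (Finset.mem_univ _), Finset.card_univ,
        Finset.card_univ, Fintype.card_fin, Fintype.card_fin]
      · omega
      · simp [Finset.disjoint_left, eY', eY, DFunLike.coe]
  · -- chromatic number
    have hcol : (G k).Colorable k := by
      refine ⟨SimpleGraph.Coloring.mk (fun v => match v with
        | Sum.inl i => ⟨i.val, by have := i.isLt; omega⟩
        | Sum.inr (Sum.inl _) => ⟨k - 1, by omega⟩
        | Sum.inr (Sum.inr (Sum.inl _)) => ⟨0, by omega⟩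
        | Sum.inr (Sum.inr (Sum.inr i)) => ⟨i.val + 1, by have := i.isLt; omega⟩) ?_⟩
      intro u v huv
      rw [Stmt12.G_adj] at huv
      obtain ⟨hne, hr⟩ := huv
      rcases u with a | a | a | a <;> rcases v with b | b | b | b <;>
        simp_all [relB, Fin.ext_iff] <;>
        (have := a.isLt; have := b.isLt; omega)
    have hclique : (G k).IsClique
        (insert ((eX' k) ⟨0, by omega⟩) ((univ : Finset (Fin (k-1))).map (eX k)) : Finset (Vt k)) := by
      intro u hu v hv hne
      simp only [Finset.coe_insert, Set.mem_insert_iff, Finset.mem_coe, Finset.mem_map] at hu hv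
      rw [Stmt12.G_adj]
      refine ⟨hne, ?_⟩
      rcases hu with rfl | ⟨a, _, rfl⟩ <;> rcases hv with rfl | ⟨b, _, rfl⟩ <;>
        simp_all [relB, eX, eX', DFunLike.coe]
    have hle : (G k).chromaticNumber ≤ (k : ℕ∞) := hcol.chromaticNumber_le
    have hge : (k : ℕ∞) ≤ (G k).chromaticNumber := by
      have := hclique.card_le_chromaticNumber
      rwa [Finset.card_insert_of_notMem (by simp [eX, eX']), Finset.card_map,
        Finset.card_univ, Fintype.card_fin, show k - 1 + 1 = k by omega] at this
    exact le_antisymm hle hge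
  · -- not k-choosable
    intro hch
    have hAcard : (Finset.Icc (1:ℤ) (k:ℤ)).card = k := by
      rw [Int.card_Icc]; omega
    obtain ⟨c, hmem, hprop⟩ := hch
      (fun v => match v with
        | Sum.inl _ => Finset.Icc (1:ℤ) (k:ℤ)
        | Sum.inr (Sum.inl i) => insert ((k:ℤ)+1) ((Finset.Icc (1:ℤ) (k:ℤ)).erase ((i.val:ℤ)+1))
        | Sum.inr (Sum.inr (Sum.inl i)) =>
            insert ((k:ℤ)+1) ((Finset.Icc (1:ℤ) (k:ℤ)).erase ((i.val:ℤ)+1))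
        | Sum.inr (Sum.inr (Sum.inr _)) => Finset.Icc (1:ℤ) (k:ℤ))
      (by
        have hprim : ∀ i : Fin k,
            (insert ((k:ℤ)+1) ((Finset.Icc (1:ℤ) (k:ℤ)).erase ((i.val:ℤ)+1))).card = k := by
          intro i
          have hi := i.isLt
          have hmemA : ((i.val:ℤ)+1) ∈ Finset.Icc (1:ℤ) (k:ℤ) := by
            rw [Finset.mem_Icc]; omega
          rw [Finset.card_insert_of_notMem (by
            rw [Finset.mem_erase, Finset.mem_Icc]; omega),
            Finset.card_erase_of_mem hmemA, hAcard]
          omega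
        intro v
        rcases v with i | i | i | i
        · exact hAcard
        · exact hprim i
        · exact hprim i
        · exact hAcard)
    -- adjacency helpers
    have adjXX : ∀ i j : Fin (k-1), i ≠ j → (G k).Adj (Sum.inl i) (Sum.inl j) := by
      intro i j h
      rw [Stmt12.G_adj]
      simp [relB, h]
    have adjXX' : ∀ (i : Fin (k-1)) (j : Fin k),
        (G k).Adj (Sum.inl i) (Sum.inr (Sum.inl j)) := by
      intro i j
      rw [Stmt12.G_adj]
      simp [relB]
    have adjX'Y' : ∀ i j : Fin k, i ≠ j →
        (G k).Adj (Sum.inr (Sum.inl i)) (Sum.inr (Sum.inr (Sum.inl j))) := by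
      intro i j h
      rw [Stmt12.G_adj]
      simp [relB, h]
    have adjY'Y : ∀ (i : Fin k) (j : Fin (k-1)),
        (G k).Adj (Sum.inr (Sum.inr (Sum.inl i))) (Sum.inr (Sum.inr (Sum.inr j))) := by
      intro i j
      rw [Stmt12.G_adj]
      simp [relB]
    have adjYY : ∀ i j : Fin (k-1), i ≠ j →
        (G k).Adj (Sum.inr (Sum.inr (Sum.inr i))) (Sum.inr (Sum.inr (Sum.inr j))) := by
      intro i j h
      rw [Stmt12.G_adj]
      simp [relB, h]
    -- key combinatorial lemma about the cliques X and Y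
    have key : ∀ f : Fin (k-1) → ℤ, Function.Injective f →
        (∀ j, f j ∈ Finset.Icc (1:ℤ) (k:ℤ)) →
        ∃ a : Fin k, (∀ j, f j ≠ (a.val:ℤ)+1) ∧
          (∀ t ∈ Finset.Icc (1:ℤ) (k:ℤ), t ≠ (a.val:ℤ)+1 → ∃ j, f j = t) := by
      intro f hinj hf
      have hS : (Finset.univ.image f) ⊆ Finset.Icc (1:ℤ) (k:ℤ) := by
        intro t ht
        obtain ⟨j, _, rfl⟩ := Finset.mem_image.mp ht
        exact hf j
      have hScard : (Finset.univ.image f).card = k - 1 := by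
        rw [Finset.card_image_of_injective _ hinj, Finset.card_univ, Fintype.card_fin]
      have h1 : ((Finset.Icc (1:ℤ) (k:ℤ)) \ Finset.univ.image f).card = 1 := by
        rw [Finset.card_sdiff_of_subset hS, hAcard, hScard]; omega
      obtain ⟨a', ha'⟩ := Finset.card_eq_one.mp h1
      have ha'mem : a' ∈ (Finset.Icc (1:ℤ) (k:ℤ)) \ Finset.univ.image f := by
        rw [ha']; exact Finset.mem_singleton_self _
      rw [Finset.mem_sdiff] at ha'mem
      have hbounds : 1 ≤ a' ∧ a' ≤ (k:ℤ) := Finset.mem_Icc.mp ha'mem.1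
      have hvlt : (a' - 1).toNat < k := by omega
      refine ⟨⟨(a' - 1).toNat, hvlt⟩, ?_, ?_⟩
      · intro j hj
        apply ha'mem.2
        refine Finset.mem_image.mpr ⟨j, Finset.mem_univ _, ?_⟩
        have : (((a' - 1).toNat : ℕ) : ℤ) = a' - 1 := by omega
        rw [hj]; simp only [this]; omega
      · intro t htA htne
        by_contra hcon
        push_neg at hcon
        have : t ∈ (Finset.Icc (1:ℤ) (k:ℤ)) \ Finset.univ.image f := by
          rw [Finset.mem_sdiff]
          refine ⟨htA, ?_⟩
          intro hmemi
          obtain ⟨j, _, hj⟩ := Finset.mem_image.mp hmemi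
          exact hcon j hj
        rw [ha', Finset.mem_singleton] at this
        apply htne
        have h2 : (((a' - 1).toNat : ℕ) : ℤ) = a' - 1 := by omega
        rw [this]; simp only [h2]; omega
    -- apply to the X clique and the Y clique
    obtain ⟨a, haX, haX2⟩ := key (fun j => c (Sum.inl j))
      (by
        intro j1 j2 h
        by_contra hne
        exact hprop (adjXX j1 j2 hne) h)
      (fun j => hmem (Sum.inl j))
    obtain ⟨b, hbY, hbY2⟩ := key (fun j => c (Sum.inr (Sum.inr (Sum.inr j))))
      (by
        intro j1 j2 h
        by_contra hne
        exact hprop (adjYY j1 j2 hne) h)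
      (fun j => hmem (Sum.inr (Sum.inr (Sum.inr j))))
    -- structure of colors on X' and Y'
    have hX' : ∀ i : Fin k, c (Sum.inr (Sum.inl i)) = (k:ℤ)+1 ∨
        (c (Sum.inr (Sum.inl i)) = (a.val:ℤ)+1 ∧ a ≠ i) := by
      intro i
      have h1 : c (Sum.inr (Sum.inl i)) ∈
          insert ((k:ℤ)+1) ((Finset.Icc (1:ℤ) (k:ℤ)).erase ((i.val:ℤ)+1)) :=
        hmem (Sum.inr (Sum.inl i))
      rcases Finset.mem_insert.mp h1 with h | h
      · exact Or.inl h
      · right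
        obtain ⟨hne, hA⟩ := Finset.mem_erase.mp h
        have h4 : c (Sum.inr (Sum.inl i)) = (a.val:ℤ)+1 := by
          by_contra hcon
          obtain ⟨j, hj⟩ := haX2 _ hA hcon
          exact hprop (adjXX' j i) hj
        refine ⟨h4, ?_⟩
        intro heq
        rw [heq] at h4
        exact hne h4
    have hY' : ∀ i : Fin k, c (Sum.inr (Sum.inr (Sum.inl i))) = (k:ℤ)+1 ∨
        (c (Sum.inr (Sum.inr (Sum.inl i))) = (b.val:ℤ)+1 ∧ b ≠ i) := by
      intro i
      have h1 : c (Sum.inr (Sum.inr (Sum.inl i))) ∈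
          insert ((k:ℤ)+1) ((Finset.Icc (1:ℤ) (k:ℤ)).erase ((i.val:ℤ)+1)) :=
        hmem (Sum.inr (Sum.inr (Sum.inl i)))
      rcases Finset.mem_insert.mp h1 with h | h
      · exact Or.inl h
      · right
        obtain ⟨hne, hA⟩ := Finset.mem_erase.mp h
        have h4 : c (Sum.inr (Sum.inr (Sum.inl i))) = (b.val:ℤ)+1 := by
          by_contra hcon
          obtain ⟨j, hj⟩ := hbY2 _ hA hcon
          exact hprop (adjY'Y i j) hj.symm
        refine ⟨h4, ?_⟩
        intro heq
        rw [heq] at h4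
        exact hne h4
    have hXa : c (Sum.inr (Sum.inl a)) = (k:ℤ)+1 := by
      rcases hX' a with h | h
      · exact h
      · exact absurd rfl h.2
    have hYb : c (Sum.inr (Sum.inr (Sum.inl b))) = (k:ℤ)+1 := by
      rcases hY' b with h | h
      · exact h
      · exact absurd rfl h.2
    by_cases hab : a = b
    · subst hab
      obtain ⟨i, j, hij, hia, hja⟩ : ∃ i j : Fin k, i ≠ j ∧ i ≠ a ∧ j ≠ a := by
        by_cases h0 : a = (⟨0, by omega⟩ : Fin k)
        · exact ⟨⟨1, by omega⟩, ⟨2, by omega⟩, by simp [Fin.ext_iff],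
            by simp [h0, Fin.ext_iff], by simp [h0, Fin.ext_iff]⟩
        · by_cases h2 : a = (⟨2, by omega⟩ : Fin k)
          · exact ⟨⟨0, by omega⟩, ⟨1, by omega⟩, by simp [Fin.ext_iff],
              by simp [h2, Fin.ext_iff], by simp [h2, Fin.ext_iff]⟩
          · exact ⟨⟨0, by omega⟩, ⟨2, by omega⟩, by simp [Fin.ext_iff],
              fun h => h0 h.symm, fun h => h2 h.symm⟩
      have hXi : c (Sum.inr (Sum.inl i)) = (a.val:ℤ)+1 := by
        rcases hX' i with h | h
        · exact absurd (h.trans hYb.symm) (hprop (adjX'Y' i a hia))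
        · exact h.1
      have hYj : c (Sum.inr (Sum.inr (Sum.inl j))) = (a.val:ℤ)+1 := by
        rcases hY' j with h | h
        · exact absurd (hXa.trans h.symm) (hprop (adjX'Y' a j (fun h' => hja h'.symm)))
        · exact h.1
      exact hprop (adjX'Y' i j hij) (hXi.trans hYj.symm)
    · exact hprop (adjX'Y' a b hab) (hXa.trans hYb.symm)
end

section
/- Let G be a bipartite graph, D an orientation of G, and L a list assignment with |L(v)| ≥ d⁺_D(v) + 1 for every vertex v, where d⁺_D(v) is the out-degree of v in D. Then G admits a proper L-coloring. -/
open SimpleGraph Finset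


lemma exists_kernel {V : Type*} [Fintype V] (G : SimpleGraph V) (col : V → Fin 2)
    (hcol : ∀ u v, G.Adj u v → col u ≠ col v)
    (D : V → V → Prop)
    (hD2 : ∀ u v, G.Adj u v → (D u v ↔ ¬ D v u))
    (A : Finset V) :
    ∃ S : Finset V, S ⊆ A ∧ (∀ u ∈ S, ∀ v ∈ S, ¬ G.Adj u v) ∧
      ∀ v ∈ A, v ∉ S → ∃ u ∈ S, D v u := by
  classical
  set Y : Set V := {y | y ∈ A ∧ col y = 1} with hY
  set B : Set V → Set V := fun P => {y ∈ Y | ∀ a ∈ P, ¬ D y a} with hBdef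
  have hBmono : ∀ P Q : Set V, P ⊆ Q → B Q ⊆ B P := by
    intro P Q hPQ y hy
    exact ⟨hy.1, fun a ha => hy.2 a (hPQ ha)⟩
  set F : Set V →o Set V :=
    ⟨fun P => {x | (x ∈ A ∧ col x = 0) ∧ ∀ y ∈ B P, ¬ D x y}, by
      intro P Q hPQ x hx
      exact ⟨hx.1, fun y hy => hx.2 y (hBmono P Q hPQ hy)⟩⟩ with hFdef
  set P : Set V := OrderHom.lfp F with hP
  have hfix : F P = P := OrderHom.map_lfp F
  set S : Finset V := Finset.univ.filter (fun v => v ∈ P ∨ v ∈ B P) with hS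
  have hmemS : ∀ v, v ∈ S ↔ v ∈ P ∨ v ∈ B P := by
    intro v; simp [hS]
  have hPX : ∀ x ∈ P, x ∈ A ∧ col x = 0 := by
    intro x hx
    rw [← hfix] at hx
    exact hx.1
  have hPabs : ∀ x ∈ P, ∀ y ∈ B P, ¬ D x y := by
    intro x hx
    rw [← hfix] at hx
    exact hx.2
  refine ⟨S, ?_, ?_, ?_⟩
  · intro v hv
    rcases (hmemS v).1 hv with h | h
    · exact (hPX v h).1
    · exact h.1.1
  · intro u hu v hv hadj
    rcases (hmemS u).1 hu with hu' | hu' <;> rcases (hmemS v).1 hv with hv' | hv'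
    · exact hcol u v hadj (by rw [(hPX u hu').2, (hPX v hv').2])
    · -- u ∈ P, v ∈ B P
      by_cases hd : D u v
      · exact hPabs u hu' v hv' hd
      · exact hv'.2 u hu' ((hD2 v u hadj.symm).2 hd)
    · by_cases hd : D v u
      · exact hPabs v hv' u hu' hd
      · exact hu'.2 v hv' ((hD2 u v hadj).2 hd)
    · exact hcol u v hadj (by rw [hu'.1.2, hv'.1.2])
  · intro v hvA hvS
    rw [hmemS] at hvS
    push_neg at hvS
    obtain ⟨hvP, hvB⟩ := hvS
    have hcv : col v = 0 ∨ col v = 1 :=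
      (by decide : ∀ i : Fin 2, i = 0 ∨ i = 1) (col v)
    rcases hcv with hcv | hcv
    · -- v ∈ X side, v ∉ P = F P
      rw [← hfix, hFdef] at hvP
      change ¬ ((v ∈ A ∧ col v = 0) ∧ ∀ y ∈ B P, ¬ D v y) at hvP
      simp only [not_and, not_forall] at hvP
      obtain ⟨y, hy, hDvy⟩ := hvP ⟨hvA, hcv⟩
      rw [not_not] at hDvy
      exact ⟨y, (hmemS y).2 (Or.inr hy), hDvy⟩
    · -- v ∈ Y side, v ∉ B P
      rw [hBdef] at hvB
      simp only [Set.mem_setOf_eq, not_and, not_forall] at hvB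
      obtain ⟨a, ha, hDva⟩ := hvB ⟨hvA, hcv⟩
      rw [not_not] at hDva
      exact ⟨a, (hmemS a).2 (Or.inl ha), hDva⟩

lemma main_aux {V : Type*} [Fintype V] (G : SimpleGraph V) (col : V → Fin 2)
    (hcol : ∀ u v, G.Adj u v → col u ≠ col v)
    (D : V → V → Prop) [DecidableRel D]
    (hD2 : ∀ u v, G.Adj u v → (D u v ↔ ¬ D v u)) :
    ∀ (n : ℕ) (W : Finset V) (L : V → Finset ℤ),
      (∑ v ∈ W, (L v).card) ≤ n →
      (∀ v ∈ W, (W.filter fun u => D v u).card < (L v).card) →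
      ∃ c : V → ℤ, (∀ v ∈ W, c v ∈ L v) ∧
        ∀ u ∈ W, ∀ v ∈ W, G.Adj u v → c u ≠ c v := by
  intro n
  induction n using Nat.strong_induction_on with
  | _ n ih =>
    intro W L hsum hdeg
    classical
    rcases W.eq_empty_or_nonempty with hW | ⟨v₀, hv₀⟩
    · subst hW
      exact ⟨fun _ => 0, by simp, by simp⟩
    -- pick a color in L v₀
    have hLv₀ : (L v₀).Nonempty := by
      rw [← Finset.card_pos]
      exact lt_of_le_of_lt (Nat.zero_le _) (hdeg v₀ hv₀)
    obtain ⟨α, hα⟩ := hLv₀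
    set A : Finset V := W.filter (fun v => α ∈ L v) with hA
    obtain ⟨S, hSA, hSind, hSabs⟩ := exists_kernel G col hcol D hD2 A
    have hSsubW : S ⊆ W := hSA.trans (Finset.filter_subset _ _)
    have hv₀A : v₀ ∈ A := by simp [hA, hv₀, hα]
    have hSne : S.Nonempty := by
      by_cases h : v₀ ∈ S
      · exact ⟨v₀, h⟩
      · obtain ⟨u, hu, _⟩ := hSabs v₀ hv₀A h
        exact ⟨u, hu⟩
    obtain ⟨s, hs⟩ := hSne
    set W' : Finset V := W \ S with hW'
    set L' : V → Finset ℤ := fun v => (L v).erase α with hL'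
    have hW'sub : W' ⊆ W := Finset.sdiff_subset
    -- degree condition for W'
    have hdeg' : ∀ v ∈ W', (W'.filter fun u => D v u).card < (L' v).card := by
      intro v hv
      have hvW : v ∈ W := hW'sub hv
      have hvS : v ∉ S := by
        rw [hW', Finset.mem_sdiff] at hv; exact hv.2
      by_cases hvA : v ∈ A
      · -- lost an out-neighbor
        obtain ⟨u, huS, hDvu⟩ := hSabs v hvA hvS
        have hss : (W'.filter fun u => D v u) ⊂ (W.filter fun u => D v u) := by
          refine Finset.ssubset_iff_of_subset
            (Finset.filter_subset_filter _ hW'sub) |>.2 ?_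
          refine ⟨u, ?_, ?_⟩
          · exact Finset.mem_filter.2 ⟨hSsubW huS, hDvu⟩
          · intro hmem
            have := (Finset.mem_filter.1 hmem).1
            rw [hW', Finset.mem_sdiff] at this
            exact this.2 huS
        have h1 : (W'.filter fun u => D v u).card < (W.filter fun u => D v u).card :=
          Finset.card_lt_card hss
        have h2 : α ∈ L v := (Finset.mem_filter.1 hvA).2
        have h3 : (L' v).card = (L v).card - 1 := by
          rw [hL']; exact Finset.card_erase_of_mem h2
        have h4 := hdeg v hvW
        omega
      · have h2 : α ∉ L v := by
          intro h; exact hvA (Finset.mem_filter.2 ⟨hvW, h⟩)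
        have h3 : L' v = L v := by rw [hL']; exact Finset.erase_eq_of_notMem h2
        rw [h3]
        exact lt_of_le_of_lt
          (Finset.card_le_card (Finset.filter_subset_filter _ hW'sub)) (hdeg v hvW)
    -- sum strictly decreases
    have hsum' : (∑ v ∈ W', (L' v).card) < n := by
      have h1 : (∑ v ∈ W', (L' v).card) ≤ ∑ v ∈ W', (L v).card :=
        Finset.sum_le_sum fun v _ => Finset.card_le_card (Finset.erase_subset _ _)
      have h2 : W' ⊆ W.erase s := by
        intro x hx
        rw [hW', Finset.mem_sdiff] at hx
        exact Finset.mem_erase.2 ⟨fun h => hx.2 (h ▸ hs), hx.1⟩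
      have h3 : (∑ v ∈ W', (L v).card) ≤ ∑ v ∈ W.erase s, (L v).card :=
        Finset.sum_le_sum_of_subset h2
      have h4 : (L s).card + ∑ v ∈ W.erase s, (L v).card = ∑ v ∈ W, (L v).card :=
        Finset.add_sum_erase _ (fun v => (L v).card) (hSsubW hs)
      have h5 : 1 ≤ (L s).card :=
        Finset.card_pos.2 ⟨α, (Finset.mem_filter.1 (hSA hs)).2⟩
      omega
    obtain ⟨c', hc'mem, hc'prop⟩ :=
      ih _ hsum' W' L' (le_refl _) hdeg'
    refine ⟨fun v => if v ∈ S then α else c' v, ?_, ?_⟩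
    · intro v hv
      by_cases h : v ∈ S
      · simp only [h, if_pos]
        exact (Finset.mem_filter.1 (hSA h)).2
      · simp only [h, if_neg, ite_false]
        have hvW' : v ∈ W' := Finset.mem_sdiff.2 ⟨hv, h⟩
        exact Finset.mem_of_mem_erase (hc'mem v hvW')
    · intro u hu v hv hadj
      by_cases h1 : u ∈ S <;> by_cases h2 : v ∈ S <;>
        simp only [h1, h2, if_pos, if_neg, ite_true, ite_false]
      · exact absurd hadj (hSind u h1 v h2)
      · have hvW' : v ∈ W' := Finset.mem_sdiff.2 ⟨hv, h2⟩
        have := hc'mem v hvW'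
        rw [hL'] at this
        exact fun h => (Finset.mem_erase.1 this).1 h.symm
      · have huW' : u ∈ W' := Finset.mem_sdiff.2 ⟨hu, h1⟩
        have := hc'mem u huW'
        rw [hL'] at this
        exact (Finset.mem_erase.1 this).1
      · exact hc'prop u (Finset.mem_sdiff.2 ⟨hu, h1⟩) v (Finset.mem_sdiff.2 ⟨hv, h2⟩) hadj

/-- Alon–Tarsi theorem for bipartite graphs: if `D` is an orientation of a
bipartite graph `G` and each list satisfies `|L(v)| ≥ d⁺_D(v) + 1`, then `G`
admits a proper coloring from the lists. -/
theorem stmt13 {V : Type*} [Fintype V] (G : SimpleGraph V)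
    (hbip : G.Colorable 2)
    (D : V → V → Prop) [DecidableRel D]
    (hD1 : ∀ u v, D u v → G.Adj u v)
    (hD2 : ∀ u v, G.Adj u v → (D u v ↔ ¬ D v u))
    (L : V → Finset ℤ)
    (hL : ∀ v, (Finset.univ.filter fun u => D v u).card + 1 ≤ (L v).card) :
    ∃ c : V → ℤ, (∀ v, c v ∈ L v) ∧ ∀ ⦃u v⦄, G.Adj u v → c u ≠ c v := by
  classical
  obtain ⟨C⟩ := hbip
  obtain ⟨c, hc1, hc2⟩ := main_aux G C (fun u v h => C.valid h) D hD2
    (∑ v ∈ Finset.univ, (L v).card) Finset.univ L (le_refl _)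
    (fun v _ => Nat.lt_of_add_one_le (hL v))
  exact ⟨c, fun v => hc1 v (Finset.mem_univ v),
    fun u v h => hc2 u (Finset.mem_univ u) v (Finset.mem_univ v) h⟩
end

section
/- Let G be a bipartite graph and L a list assignment with |L(v)| ≥ ⌈d_G(v)/2⌉ + 1 for every vertex v. Then G admits a proper L-coloring. Moreover, for any single distinguished vertex z, the weaker condition |L(z)| ≥ ⌊d_G(z)/2⌋ + 1 suffices at z (keeping the original condition at all other vertices). -/
open SimpleGraph Finset

lemma exists_kernel_s14 {V : Type*} (D : Finset (V × V)) (b : V → Bool)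
    (hb : ∀ p ∈ D, b p.1 ≠ b p.2) (U : Set V) :
    ∃ K : Set V, K ⊆ U ∧ (∀ p ∈ D, ¬(p.1 ∈ K ∧ p.2 ∈ K)) ∧
      ∀ v ∈ U, v ∉ K → ∃ w ∈ K, (v, w) ∈ D := by
  classical
  set F : Set V →o Set V :=
    ⟨fun S => {a | a ∈ U ∧ b a = true ∧
        ∀ w ∈ U, (a, w) ∈ D → ∃ a' ∈ S, (w, a') ∈ D},
     by
      intro S T hST a ha
      exact ⟨ha.1, ha.2.1, fun w hw hwD => by
        obtain ⟨a', ha', hD⟩ := ha.2.2 w hw hwD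
        exact ⟨a', hST ha', hD⟩⟩⟩ with hF
  set KA : Set V := OrderHom.lfp F with hKA
  have hfix : F KA = KA := OrderHom.map_lfp F
  set KB : Set V := {w | w ∈ U ∧ b w = false ∧ ∀ a' ∈ KA, (w, a') ∉ D} with hKB
  have hKAsub : KA ⊆ U := by
    intro a ha; rw [← hfix] at ha; exact ha.1
  have hKAtrue : ∀ a ∈ KA, b a = true := by
    intro a ha; rw [← hfix] at ha; exact ha.2.1
  refine ⟨KA ∪ KB, ?_, ?_, ?_⟩
  · intro v hv
    rcases hv with h | h
    · exact hKAsub h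
    · exact h.1
  · rintro p hp ⟨h1, h2⟩
    rcases h1 with h1 | h1 <;> rcases h2 with h2 | h2
    · exact hb p hp (by rw [hKAtrue _ h1, hKAtrue _ h2])
    · -- p.1 ∈ KA = F KA, p.2 ∈ KB
      rw [← hfix] at h1
      obtain ⟨a', ha', hD⟩ := h1.2.2 p.2 h2.1 hp
      exact h2.2.2 a' ha' hD
    · exact h1.2.2 p.2 h2 hp
    · exact hb p hp (by rw [h1.2.1, h2.2.1])
  · intro v hvU hvK
    by_cases hbv : b v = true
    · have hvKA : v ∉ KA := fun h => hvK (Or.inl h)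
      rw [← hfix] at hvKA
      change v ∉ {a | a ∈ U ∧ b a = true ∧ ∀ w ∈ U, (a, w) ∈ D → ∃ a' ∈ KA, (w, a') ∈ D} at hvKA
      simp only [hF, OrderHom.coe_mk, Set.mem_setOf_eq, not_and, not_forall] at hvKA
      obtain ⟨w, hwU, hwD, hno⟩ := hvKA hvU hbv
      have hbw : b w = false := by
        have := hb _ hwD; simp only at this
        rw [hbv] at this
        simpa using this.symm
      refine ⟨w, Or.inr ⟨hwU, hbw, ?_⟩, hwD⟩
      intro a' ha' hD
      exact hno ⟨a', ha', hD⟩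
    · have hvKB : v ∉ KB := fun h => hvK (Or.inr h)
      simp only [hKB, Set.mem_setOf_eq, not_and, not_forall] at hvKB
      obtain ⟨a', ha', hD⟩ := hvKB hvU (by simpa using hbv)
      exact ⟨a', Or.inl ha', by simpa using hD⟩

lemma color_of_orientation {V : Type*} [DecidableEq V] :
    ∀ (n : ℕ) (S : Finset V), S.card ≤ n →
    ∀ (D : Finset (V × V)), (∀ p ∈ D, p.1 ∈ S ∧ p.2 ∈ S) →
    ∀ (b : V → Bool), (∀ p ∈ D, b p.1 ≠ b p.2) →
    ∀ (L : V → Finset ℤ), (∀ v ∈ S, (D.filter (fun p => p.1 = v)).card < (L v).card) →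
    ∃ c : V → ℤ, (∀ v ∈ S, c v ∈ L v) ∧ ∀ p ∈ D, c p.1 ≠ c p.2 := by
  classical
  intro n
  induction n with
  | zero =>
    intro S hS D hDS b hb L hL
    have hSe : S = ∅ := Finset.card_eq_zero.mp (Nat.le_zero.mp hS)
    subst hSe
    refine ⟨fun _ => 0, by simp, fun p hp => absurd (hDS p hp).1 (by simp)⟩
  | succ n ih =>
    intro S hS D hDS b hb L hL
    rcases S.eq_empty_or_nonempty with hSe | ⟨v₀, hv₀⟩
    · subst hSe
      exact ⟨fun _ => 0, by simp, fun p hp => absurd (hDS p hp).1 (by simp)⟩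
    · have hL0 : 0 < (L v₀).card := lt_of_le_of_lt (Nat.zero_le _) (hL v₀ hv₀)
      obtain ⟨α, hα⟩ := Finset.card_pos.mp hL0
      set U : Set V := {v | v ∈ S ∧ α ∈ L v} with hU
      obtain ⟨K, hKU, hKind, hKabs⟩ := exists_kernel_s14 D b hb U
      set Kf : Finset V := S.filter (fun v => v ∈ K) with hKf
      have hKfK : ∀ v, v ∈ Kf ↔ v ∈ S ∧ v ∈ K := by
        intro v; simp [hKf]
      have hKfne : Kf.Nonempty := by
        by_cases h : v₀ ∈ K
        · exact ⟨v₀, (hKfK v₀).mpr ⟨hv₀, h⟩⟩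
        · obtain ⟨w, hwK, -⟩ := hKabs v₀ ⟨hv₀, hα⟩ h
          exact ⟨w, (hKfK w).mpr ⟨(hKU hwK).1, hwK⟩⟩
      set S' : Finset V := S \ Kf with hS'
      have hS'card : S'.card ≤ n := by
        have : S' ⊂ S := Finset.sdiff_ssubset (Finset.filter_subset _ _) hKfne
        have := Finset.card_lt_card this
        omega
      set D' : Finset (V × V) := D.filter (fun p => p.1 ∈ S' ∧ p.2 ∈ S') with hD'
      set L' : V → Finset ℤ := fun v => if α ∈ L v then (L v).erase α else L v with hL'
      have hmemS' : ∀ v, v ∈ S' ↔ v ∈ S ∧ v ∉ K := by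
        intro v
        simp only [hS', Finset.mem_sdiff, hKfK]
        tauto
      have hL'bound : ∀ v ∈ S', (D'.filter (fun p => p.1 = v)).card < (L' v).card := by
        intro v hv
        have hvS : v ∈ S := ((hmemS' v).mp hv).1
        have hvK : v ∉ K := ((hmemS' v).mp hv).2
        by_cases hαv : α ∈ L v
        · obtain ⟨w, hwK, hwD⟩ := hKabs v ⟨hvS, hαv⟩ hvK
          have hwKf : w ∈ Kf := (hKfK w).mpr ⟨(hKU hwK).1, hwK⟩
          have hwS' : w ∉ S' := by simp [hS', hwKf]
          have hsub : D'.filter (fun p => p.1 = v) ⊆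
              (D.filter (fun p => p.1 = v)).erase (v, w) := by
            intro p hp
            simp only [hD', Finset.mem_filter] at hp
            refine Finset.mem_erase.mpr ⟨?_, Finset.mem_filter.mpr ⟨hp.1.1, hp.2⟩⟩
            rintro rfl
            exact hwS' hp.1.2.2
          have hmem : (v, w) ∈ D.filter (fun p => p.1 = v) :=
            Finset.mem_filter.mpr ⟨hwD, rfl⟩
          have h1 : (D'.filter (fun p => p.1 = v)).card ≤
              (D.filter (fun p => p.1 = v)).card - 1 := by
            calc _ ≤ ((D.filter (fun p => p.1 = v)).erase (v, w)).card :=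
                  Finset.card_le_card hsub
              _ = _ := Finset.card_erase_of_mem hmem
          have h2 : 1 ≤ (D.filter (fun p => p.1 = v)).card := Finset.card_pos.mpr ⟨_, hmem⟩
          have h3 : (D.filter (fun p => p.1 = v)).card < (L v).card := hL v hvS
          have h4 : (L' v).card = (L v).card - 1 := by
            have hh : L' v = (L v).erase α := by simp [hL', hαv]
            rw [hh, Finset.card_erase_of_mem hαv]
          have key : ∀ x y z w2 : ℕ, x ≤ y - 1 → 1 ≤ y → y < z → w2 = z - 1 → x < w2 := by
            intros; omega
          exact key _ _ _ _ h1 h2 h3 h4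
        · have h1 : (D'.filter (fun p => p.1 = v)).card ≤
              (D.filter (fun p => p.1 = v)).card :=
            Finset.card_le_card (fun p hp => by
              simp only [hD', Finset.mem_filter] at hp ⊢
              exact ⟨hp.1.1, hp.2⟩)
          have h4 : (L' v) = L v := by simp [hL', hαv]
          have := hL v hvS
          rw [h4]
          exact lt_of_le_of_lt h1 this
      obtain ⟨c', hc'mem, hc'prop⟩ := ih S' hS'card D'
        (fun p hp => (Finset.mem_filter.mp hp).2) b
        (fun p hp => hb p (Finset.mem_filter.mp hp).1) L' hL'bound
      refine ⟨fun v => if v ∈ Kf then α else c' v, ?_, ?_⟩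
      · intro v hv
        by_cases hvKf : v ∈ Kf
        · simp only [hvKf, if_pos]
          exact (hKU ((hKfK v).mp hvKf).2).2
        · simp only [hvKf, if_neg, if_false]
          have hvS' : v ∈ S' := (hmemS' v).mpr ⟨hv, fun h => hvKf ((hKfK v).mpr ⟨hv, h⟩)⟩
          have := hc'mem v hvS'
          by_cases hαv : α ∈ L v
          · simp only [hL', hαv, if_pos] at this
            exact Finset.mem_of_mem_erase this
          · simpa [hL', hαv] using this
      · intro p hp
        have hp1S : p.1 ∈ S := (hDS p hp).1
        have hp2S : p.2 ∈ S := (hDS p hp).2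
        by_cases h1 : p.1 ∈ Kf <;> by_cases h2 : p.2 ∈ Kf <;>
          simp only [h1, h2, if_pos, if_neg, if_false, if_true]
        · exact absurd ⟨((hKfK _).mp h1).2, ((hKfK _).mp h2).2⟩ (hKind p hp)
        · -- c p.1 = α, p.2 ∉ Kf
          have hp2S' : p.2 ∈ S' := (hmemS' _).mpr ⟨hp2S, fun h => h2 ((hKfK _).mpr ⟨hp2S, h⟩)⟩
          have hmem := hc'mem _ hp2S'
          intro heq
          by_cases hαv : α ∈ L p.2
          · simp only [hL', hαv, if_pos] at hmem
            exact (Finset.ne_of_mem_erase hmem) heq.symm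
          · rw [← heq] at hmem
            rw [show L' p.2 = L p.2 from by simp [hL', hαv]] at hmem
            exact hαv hmem
        · have hp1S' : p.1 ∈ S' := (hmemS' _).mpr ⟨hp1S, fun h => h1 ((hKfK _).mpr ⟨hp1S, h⟩)⟩
          have hmem := hc'mem _ hp1S'
          intro heq
          by_cases hαv : α ∈ L p.1
          · simp only [hL', hαv, if_pos] at hmem
            exact (Finset.ne_of_mem_erase hmem) heq
          · rw [heq] at hmem
            rw [show L' p.1 = L p.1 from by simp [hL', hαv]] at hmem
            exact hαv hmem
        · have hp1S' : p.1 ∈ S' := (hmemS' _).mpr ⟨hp1S, fun h => h1 ((hKfK _).mpr ⟨hp1S, h⟩)⟩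
          have hp2S' : p.2 ∈ S' := (hmemS' _).mpr ⟨hp2S, fun h => h2 ((hKfK _).mpr ⟨hp2S, h⟩)⟩
          exact hc'prop p (Finset.mem_filter.mpr ⟨hp, hp1S', hp2S'⟩)

lemma exists_orientation {V : Type*} [DecidableEq V] :
    ∀ (n : ℕ) (E : Finset (Sym2 V)), E.card ≤ n → (∀ e ∈ E, ¬ e.IsDiag) →
    ∀ z : V, ∃ D : Finset (V × V),
      (∀ p ∈ D, s(p.1, p.2) ∈ E) ∧
      (∀ u v : V, s(u, v) ∈ E → ((u, v) ∈ D ↔ (v, u) ∉ D)) ∧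
      (∀ v, 2 * (D.filter (fun p => p.1 = v)).card ≤ (E.filter (fun e => v ∈ e)).card + 1) ∧
      2 * (D.filter (fun p => p.1 = z)).card ≤ (E.filter (fun e => z ∈ e)).card := by
  classical
  intro n
  induction n with
  | zero =>
    intro E hE hdiag z
    have : E = ∅ := Finset.card_eq_zero.mp (Nat.le_zero.mp hE)
    subst this
    exact ⟨∅, by simp, by simp, by simp, by simp⟩
  | succ n ih =>
    intro E hEc hdiag z
    rcases E.eq_empty_or_nonempty with rfl | hEne
    · exact ⟨∅, by simp, by simp, by simp, by simp⟩
    obtain ⟨a, b, hab, habE, haz⟩ :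
        ∃ a b : V, a ≠ b ∧ s(a, b) ∈ E ∧ (b = z ∨ ∀ e ∈ E, z ∉ e) := by
      by_cases hz : ∃ e ∈ E, z ∈ e
      · obtain ⟨e, heE, hze⟩ := hz
        obtain ⟨u, rfl⟩ := Sym2.mem_iff_exists.mp hze
        have hne : z ≠ u := fun h => hdiag _ heE (by rw [h]; exact Sym2.mk_isDiag_iff.mpr rfl)
        exact ⟨u, z, hne.symm, by rwa [Sym2.eq_swap], Or.inl rfl⟩
      · push_neg at hz
        obtain ⟨e, heE⟩ := hEne
        induction e using Sym2.ind with
        | _ x y => exact ⟨x, y, fun h => hdiag _ heE (Sym2.mk_isDiag_iff.mpr h), heE, Or.inr hz⟩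
    have hE'c : (E.erase s(a, b)).card ≤ n := by
      have h0 := Finset.card_erase_of_mem habE
      have h1 : 1 ≤ E.card := Finset.card_pos.mpr ⟨_, habE⟩
      omega
    obtain ⟨D', hD'mk, hD'or, hD'deg, hD'a⟩ :=
      ih (E.erase s(a, b)) hE'c (fun e he => hdiag e (Finset.mem_of_mem_erase he)) a
    have habE' : s(a, b) ∉ E.erase s(a, b) := Finset.notMem_erase _ _
    have hbaE' : s(b, a) ∉ E.erase s(a, b) := by
      rw [show (s(b, a) : Sym2 V) = s(a, b) from Sym2.eq_swap]; exact habE'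
    have habD' : (a, b) ∉ D' := fun h => habE' (hD'mk _ h)
    have hbaD' : (b, a) ∉ D' := fun h => hbaE' (hD'mk _ h)
    have hEins : E = insert s(a, b) (E.erase s(a, b)) := (Finset.insert_erase habE).symm
    have hout : ∀ v : V, ((insert (a, b) D').filter (fun p => p.1 = v)).card =
        (D'.filter (fun p => p.1 = v)).card + (if a = v then 1 else 0) := by
      intro v
      rw [Finset.filter_insert]
      by_cases hav : a = v
      · rw [if_pos (show (a, b).1 = v from hav), if_pos hav,
          Finset.card_insert_of_notMem (fun h => habD' (Finset.mem_filter.mp h).1)]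
      · rw [if_neg (show ¬(a, b).1 = v from hav), if_neg hav, Nat.add_zero]
    have hdeg : ∀ v : V, (E.filter (fun e => v ∈ e)).card =
        ((E.erase s(a, b)).filter (fun e => v ∈ e)).card + (if v ∈ s(a, b) then 1 else 0) := by
      intro v
      conv_lhs => rw [hEins]
      rw [Finset.filter_insert]
      by_cases hv : v ∈ s(a, b)
      · rw [if_pos hv, if_pos hv,
          Finset.card_insert_of_notMem (fun h => habE' (Finset.mem_filter.mp h).1)]
      · rw [if_neg hv, if_neg hv, Nat.add_zero]
    refine ⟨insert (a, b) D', ?_, ?_, ?_, ?_⟩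
    · intro p hp
      rcases Finset.mem_insert.mp hp with rfl | hp
      · exact habE
      · exact Finset.mem_of_mem_erase (hD'mk p hp)
    · intro u v huv
      by_cases hcase : s(u, v) = s(a, b)
      · rcases Sym2.eq_iff.mp hcase with ⟨rfl, rfl⟩ | ⟨rfl, rfl⟩
        · constructor
          · intro _ hvu
            rcases Finset.mem_insert.mp hvu with h | h
            · exact hab (congrArg Prod.fst h).symm
            · exact hbaD' h
          · intro _
            exact Finset.mem_insert_self _ _
        · constructor
          · intro h
            rcases Finset.mem_insert.mp h with h | h
            · exact hab ((congrArg Prod.fst h).symm) |>.elim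
            · exact (hbaD' h).elim
          · intro h
            exact absurd (Finset.mem_insert_self _ _) h
      · have huvE' : s(u, v) ∈ E.erase s(a, b) := Finset.mem_erase.mpr ⟨hcase, huv⟩
        have h1 : (u, v) ≠ (a, b) := by
          intro h
          rw [Prod.mk.injEq] at h
          exact hcase (by rw [h.1, h.2])
        have h2 : (v, u) ≠ (a, b) := by
          intro h
          rw [Prod.mk.injEq] at h
          exact hcase (by rw [h.1, h.2]; exact Sym2.eq_swap)
        rw [Finset.mem_insert, Finset.mem_insert]
        simp only [h1, h2, false_or]
        exact hD'or u v huvE'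
    · intro v
      rw [hout v, hdeg v]
      by_cases hva : a = v
      · subst hva
        rw [if_pos rfl, if_pos (Sym2.mem_mk_left a b)]
        have := hD'a
        omega
      · rw [if_neg hva]
        have := hD'deg v
        split <;> omega
    · rcases haz with rfl | hziso
      · rw [hout b, hdeg b, if_neg hab, if_pos (Sym2.mem_mk_right a b)]
        have := hD'deg b
        omega
      · have houtz : ((insert (a, b) D').filter (fun p => p.1 = z)).card = 0 := by
          rw [Finset.card_eq_zero, Finset.filter_eq_empty_iff]
          rintro p hp rfl
          rcases Finset.mem_insert.mp hp with h | h
          · exact hziso _ habE (h ▸ Sym2.mem_mk_left _ _)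
          · exact hziso _ (Finset.mem_of_mem_erase (hD'mk _ h)) (Sym2.mem_mk_left _ _)
        rw [houtz]
        exact Nat.zero_le _

lemma core_coloring {V : Type*} [Fintype V] (G : SimpleGraph V)
    [DecidableRel G.Adj] (hbip : G.Colorable 2) (z : V) (L : V → Finset ℤ)
    (hL : ∀ v, v ≠ z → (G.degree v + 1) / 2 + 1 ≤ (L v).card)
    (hLz : G.degree z / 2 + 1 ≤ (L z).card) :
    ∃ c : V → ℤ, (∀ v, c v ∈ L v) ∧ ∀ ⦃u v⦄, G.Adj u v → c u ≠ c v := by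
  classical
  obtain ⟨C⟩ := hbip
  obtain ⟨D, hDmk, hDor, hDdeg, hDz⟩ :=
    exists_orientation G.edgeFinset.card G.edgeFinset le_rfl
      (fun e he => (G.not_isDiag_of_mem_edgeSet (mem_edgeFinset.mp he))) z
  have hadj : ∀ p ∈ D, G.Adj p.1 p.2 := by
    rintro ⟨u, w⟩ hp
    exact G.mem_edgeSet.mp (mem_edgeFinset.mp (hDmk _ hp))
  have hdegeq : ∀ v, (G.edgeFinset.filter (fun e => v ∈ e)).card = G.degree v := by
    intro v
    rw [← SimpleGraph.card_incidenceFinset_eq_degree]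
    congr 1
    ext e
    simp only [Finset.mem_filter, SimpleGraph.mem_incidenceFinset,
      SimpleGraph.incidenceSet, Set.mem_setOf_eq, SimpleGraph.mem_edgeFinset,
      Set.mem_sep_iff, SimpleGraph.mem_edgeSet]
  have key : ∀ x y : Fin 2, decide (x = 0) = decide (y = 0) → x = y := by decide
  set b : V → Bool := fun v => decide (C v = 0) with hbdef
  have hbval : ∀ p ∈ D, b p.1 ≠ b p.2 := by
    intro p hp h
    exact (C.valid (hadj p hp)) (key _ _ h)
  have hLbound : ∀ v ∈ (Finset.univ : Finset V),
      (D.filter (fun p => p.1 = v)).card < (L v).card := by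
    intro v _
    by_cases hvz : v = z
    · subst hvz
      have h1 : 2 * (D.filter (fun p => p.1 = v)).card ≤ G.degree v := by
        rw [← hdegeq v]; exact hDz
      have h2 : (D.filter (fun p => p.1 = v)).card ≤ G.degree v / 2 :=
        (Nat.le_div_iff_mul_le (by norm_num)).mpr (by omega)
      omega
    · have h1 : 2 * (D.filter (fun p => p.1 = v)).card ≤ G.degree v + 1 := by
        rw [← hdegeq v]; exact hDdeg v
      have h2 : (D.filter (fun p => p.1 = v)).card ≤ (G.degree v + 1) / 2 :=
        (Nat.le_div_iff_mul_le (by norm_num)).mpr (by omega)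
      have := hL v hvz
      omega
  obtain ⟨c, hc1, hc2⟩ := color_of_orientation Finset.univ.card Finset.univ le_rfl D
    (fun p _ => ⟨Finset.mem_univ _, Finset.mem_univ _⟩) b hbval L hLbound
  refine ⟨c, fun v => hc1 v (Finset.mem_univ v), ?_⟩
  intro u v huv
  have hE : s(u, v) ∈ G.edgeFinset := mem_edgeFinset.mpr (G.mem_edgeSet.mpr huv)
  by_cases hD : (u, v) ∈ D
  · exact hc2 (u, v) hD
  · have hvu : (v, u) ∈ D := by
      have := hDor u v hE
      tauto
    exact (hc2 (v, u) hvu).symm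

/-- For a finite bipartite graph `G`: (1) if `|L(v)| ≥ ⌈d(v)/2⌉ + 1` for every
vertex, then `G` is `L`-colorable; (2) moreover, for any distinguished vertex
`z` the weaker bound `|L(z)| ≥ ⌊d(z)/2⌋ + 1` suffices at `z`. -/
theorem stmt14 {V : Type*} [Fintype V] (G : SimpleGraph V)
    [DecidableRel G.Adj] (hbip : G.Colorable 2) :
    (∀ L : V → Finset ℤ, (∀ v, (G.degree v + 1) / 2 + 1 ≤ (L v).card) →
      ∃ c : V → ℤ, (∀ v, c v ∈ L v) ∧ ∀ ⦃u v⦄, G.Adj u v → c u ≠ c v) ∧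
    ∀ (z : V) (L : V → Finset ℤ),
      (∀ v, v ≠ z → (G.degree v + 1) / 2 + 1 ≤ (L v).card) →
      G.degree z / 2 + 1 ≤ (L z).card →
      ∃ c : V → ℤ, (∀ v, c v ∈ L v) ∧ ∀ ⦃u v⦄, G.Adj u v → c u ≠ c v := by
  constructor
  · intro L hL
    cases isEmpty_or_nonempty V with
    | inl h => exact ⟨fun v => (h.false v).elim, fun v => (h.false v).elim,
        fun u v huv => ((h.false u)).elim⟩
    | inr h =>
      obtain ⟨z⟩ := h
      refine core_coloring G hbip z L (fun v _ => hL v) ?_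
      have h1 : G.degree z / 2 ≤ (G.degree z + 1) / 2 :=
        Nat.div_le_div_right (Nat.le_succ _)
      have := hL z
      omega
  · intro z L hL hLz
    exact core_coloring G hbip z L hL hLz
end

section
/- For every graph G and every positive integer m, χ̄_m(G) ≤ χ̄_{m−1}(G) + χ(G), and consequently χ̄_m(G) ≤ (m+1)·χ(G). -/
open SimpleGraph Finset

/-- The `m`-avoiding chromatic number `χ̄_m(G)`: the least `k` such that for every
assignment `L` of at most `m` forbidden integers to each vertex, there is a
proper coloring `c : V → {1,…,k}` with `c v ∉ L v` for all `v`. -/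
noncomputable def avoidChromaticNumber {V : Type*} (G : SimpleGraph V) (m : ℕ) : ℕ :=
  sInf {k | ∀ L : V → Finset ℤ, (∀ v, (L v).card ≤ m) →
    ∃ c : V → ℕ, (∀ v, c v ∈ Finset.Icc 1 k) ∧ (∀ v, (c v : ℤ) ∉ L v) ∧
      ∀ ⦃u v⦄, G.Adj u v → c u ≠ c v}

private def avoidSet {V : Type*} (G : SimpleGraph V) (m : ℕ) : Set ℕ :=
  {k | ∀ L : V → Finset ℤ, (∀ v, (L v).card ≤ m) →
    ∃ c : V → ℕ, (∀ v, c v ∈ Finset.Icc 1 k) ∧ (∀ v, (c v : ℤ) ∉ L v) ∧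
      ∀ ⦃u v⦄, G.Adj u v → c u ≠ c v}

/-- In any interval of `j+1` consecutive positive integers there is one avoiding a
list of at most `j` forbidden integers. -/
private lemma exists_avoid (a j : ℕ) (L : Finset ℤ) (hL : L.card ≤ j) :
    ∃ x ∈ Finset.Icc (a + 1) (a + j + 1), (x : ℤ) ∉ L := by
  have hcard : ((Finset.Icc (a + 1) (a + j + 1)).image (fun x : ℕ => (x : ℤ))).card = j + 1 := by
    rw [Finset.card_image_of_injective _ (fun x y h => by exact_mod_cast h)]
    rw [Nat.card_Icc]
    omega
  have hns : ¬ ((Finset.Icc (a + 1) (a + j + 1)).image (fun x : ℕ => (x : ℤ))) ⊆ L := by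
    intro hsub
    have := Finset.card_le_card hsub
    omega
  obtain ⟨y, hy, hyL⟩ := Finset.not_subset.mp hns
  obtain ⟨x, hx, rfl⟩ := Finset.mem_image.mp hy
  exact ⟨x, hx, hyL⟩

private lemma avoidSet_nonempty {V : Type*} [Fintype V] (G : SimpleGraph V) (j : ℕ) :
    (avoidSet G j).Nonempty := by
  classical
  refine ⟨(j + 1) * Fintype.card V, ?_⟩
  intro L hL
  set e := Fintype.equivFin V with he
  choose c hc1 hc2 using fun v => exists_avoid ((j + 1) * (e v : ℕ)) j (L v) (hL v)
  have hb : ∀ v, (j + 1) * (e v : ℕ) + 1 ≤ c v ∧ c v ≤ (j + 1) * (e v : ℕ) + j + 1 := by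
    intro v
    have := Finset.mem_Icc.mp (hc1 v)
    omega
  have hmono : ∀ u v : V, (e u : ℕ) < (e v : ℕ) → c u < c v := by
    intro u v huv
    have h1 := (hb u).2
    have h2 := (hb v).1
    have : (j + 1) * ((e u : ℕ) + 1) ≤ (j + 1) * (e v : ℕ) :=
      Nat.mul_le_mul_left _ (by omega)
    nlinarith
  refine ⟨c, ?_, hc2, ?_⟩
  · intro v
    have h1 := (hb v).1
    have h2 := (hb v).2
    have hv : (e v : ℕ) + 1 ≤ Fintype.card V := (e v).2
    have : (j + 1) * ((e v : ℕ) + 1) ≤ (j + 1) * Fintype.card V :=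
      Nat.mul_le_mul_left _ hv
    rw [Finset.mem_Icc]
    constructor
    · omega
    · nlinarith
  · intro u v huv
    have hne : u ≠ v := G.ne_of_adj huv
    have hene : (e u : ℕ) ≠ (e v : ℕ) := by
      intro h
      exact hne (e.injective (Fin.ext h))
    rcases Nat.lt_or_ge (e u : ℕ) (e v : ℕ) with h | h
    · exact Nat.ne_of_lt (hmono u v h)
    · exact (Nat.ne_of_lt (hmono v u (by omega))).symm

/-- Key step: from a proper `n`-coloring and `k ∈ avoidSet G m` we get
`k + n ∈ avoidSet G (m+1)`. -/
private lemma key_step {V : Type*} (G : SimpleGraph V) (m n k : ℕ)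
    (d : V → ℕ) (hd : ∀ v, d v < n) (hdp : ∀ ⦃u v⦄, G.Adj u v → d u ≠ d v)
    (hk : k ∈ avoidSet G m) : k + n ∈ avoidSet G (m + 1) := by
  classical
  intro L hL
  set fresh : V → ℕ := fun v => k + d v + 1 with hfresh
  set L' : V → Finset ℤ := fun v =>
    if ((fresh v : ℤ)) ∈ L v then (L v).erase (fresh v) else ∅ with hL'
  have hL'card : ∀ v, (L' v).card ≤ m := by
    intro v
    by_cases h : ((fresh v : ℤ)) ∈ L v
    · simp only [hL', if_pos h]
      have := Finset.card_erase_of_mem h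
      have := hL v
      omega
    · simp [hL', if_neg h]
  obtain ⟨c, hc1, hc2, hc3⟩ := hk L' hL'card
  have hck : ∀ v, c v ≤ k := fun v => (Finset.mem_Icc.mp (hc1 v)).2
  have hc1' : ∀ v, 1 ≤ c v := fun v => (Finset.mem_Icc.mp (hc1 v)).1
  refine ⟨fun v => if ((fresh v : ℤ)) ∈ L v then c v else fresh v, ?_, ?_, ?_⟩
  · intro v
    dsimp only
    by_cases h : ((fresh v : ℤ)) ∈ L v
    · rw [if_pos h, Finset.mem_Icc]
      exact ⟨hc1' v, le_trans (hck v) (Nat.le_add_right _ _)⟩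
    · rw [if_neg h, Finset.mem_Icc]
      have := hd v
      constructor <;> simp only [hfresh] <;> omega
  · intro v
    dsimp only
    by_cases h : ((fresh v : ℤ)) ∈ L v
    · rw [if_pos h]
      intro hmem
      have hne : (c v : ℤ) ≠ (fresh v : ℤ) := by
        have : c v ≠ fresh v := by
          have := hck v; simp only [hfresh]; omega
        exact_mod_cast this
      have : (c v : ℤ) ∈ L' v := by
        simp only [hL', if_pos h]
        exact Finset.mem_erase.mpr ⟨hne, hmem⟩
      exact hc2 v this
    · rw [if_neg h]
      exact h
  · intro u v huv
    dsimp only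
    have hdu := hdp huv
    by_cases h1 : ((fresh u : ℤ)) ∈ L u <;> by_cases h2 : ((fresh v : ℤ)) ∈ L v <;>
      simp only [if_pos, if_neg, h1, h2, if_true, if_false]
    · exact hc3 huv
    · have := hck u; simp only [hfresh]; omega
    · have := hck v; simp only [hfresh]; omega
    · simp only [hfresh]; omega

private lemma base_step {V : Type*} (G : SimpleGraph V) (n : ℕ)
    (d : V → ℕ) (hd : ∀ v, d v < n) (hdp : ∀ ⦃u v⦄, G.Adj u v → d u ≠ d v) :
    n ∈ avoidSet G 0 := by
  intro L hL
  refine ⟨fun v => d v + 1, ?_, ?_, ?_⟩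
  · intro v
    dsimp only
    rw [Finset.mem_Icc]
    have := hd v
    omega
  · intro v
    dsimp only
    have : L v = ∅ := Finset.card_eq_zero.mp (Nat.le_zero.mp (hL v))
    simp [this]
  · intro u v huv
    dsimp only
    have := hdp huv
    omega

/-- For every graph `G` and `m ≥ 1`,
`χ̄_m(G) ≤ χ̄_{m-1}(G) + χ(G)` and consequently `χ̄_m(G) ≤ (m+1)·χ(G)`. -/
theorem stmt17 {V : Type*} [Fintype V] (G : SimpleGraph V) (m : ℕ) (hm : 1 ≤ m) :
    (avoidChromaticNumber G m : ℕ∞) ≤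
      (avoidChromaticNumber G (m - 1) : ℕ∞) + G.chromaticNumber ∧
    (avoidChromaticNumber G m : ℕ∞) ≤ (m + 1) * G.chromaticNumber := by
  classical
  have hfin : G.chromaticNumber ≤ (Fintype.card V : ℕ∞) :=
    chromaticNumber_le_iff_colorable.mpr G.colorable_of_fintype
  set n : ℕ := G.chromaticNumber.toNat with hn
  have hne : G.chromaticNumber ≠ ⊤ := ne_top_of_le_ne_top (ENat.coe_ne_top _) hfin
  have hχ : G.chromaticNumber = (n : ℕ∞) := (ENat.coe_toNat hne).symm
  have hcol : G.Colorable n := chromaticNumber_le_iff_colorable.mp (le_of_eq hχ)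
  obtain ⟨C⟩ := hcol
  set d : V → ℕ := fun v => (C v : ℕ) with hdd
  have hd : ∀ v, d v < n := fun v => (C v).2
  have hdp : ∀ ⦃u v⦄, G.Adj u v → d u ≠ d v := by
    intro u v huv h
    exact C.valid huv (Fin.ext h)
  have heq : ∀ j, avoidChromaticNumber G j = sInf (avoidSet G j) := fun j => rfl
  -- first inequality in ℕ
  have h1 : avoidChromaticNumber G m ≤ avoidChromaticNumber G (m - 1) + n := by
    rw [heq, heq]
    have hmem : sInf (avoidSet G (m - 1)) ∈ avoidSet G (m - 1) :=
      Nat.sInf_mem (avoidSet_nonempty G (m - 1))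
    have := key_step G (m - 1) n _ d hd hdp hmem
    rw [show m - 1 + 1 = m by omega] at this
    exact Nat.sInf_le this
  -- second inequality in ℕ, by induction
  have h2 : ∀ j, avoidChromaticNumber G j ≤ (j + 1) * n := by
    intro j
    induction j with
    | zero =>
      rw [heq]
      simpa using Nat.sInf_le (base_step G n d hd hdp)
    | succ j ih =>
      rw [heq]
      have hmem : sInf (avoidSet G j) ∈ avoidSet G j :=
        Nat.sInf_mem (avoidSet_nonempty G j)
      have hstep := Nat.sInf_le (key_step G j n _ d hd hdp hmem)
      rw [← heq] at hstep
      calc avoidChromaticNumber G (j + 1) ≤ avoidChromaticNumber G j + n := hstep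
      _ ≤ (j + 1) * n + n := by omega
      _ = (j + 1 + 1) * n := by ring
  constructor
  · rw [hχ]
    exact_mod_cast h1
  · rw [hχ]
    have := h2 m
    calc (avoidChromaticNumber G m : ℕ∞) ≤ (((m + 1) * n : ℕ) : ℕ∞) := by exact_mod_cast this
    _ = (m + 1) * (n : ℕ∞) := by push_cast; ring
end

section
/- Let m, p be positive integers and let G be a complete multipartite graph in which every part has size C(p, m) (binomial coefficient). Then χ̄_m(G) ≥ min{ χ(G) + (1 − 1/(m+1))·p , (m+1)·χ(G) }. -/
open SimpleGraph Finset

/-- The complete multipartite graph with parts indexed by `ι`, each of size `s`. -/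
def completeMultipartite (ι : Type*) (s : ℕ) : SimpleGraph (ι × Fin s) where
  Adj a b := a.1 ≠ b.1
  symm := ⟨fun _ _ h => h.symm⟩
  loopless := ⟨fun _ h => h rfl⟩

lemma key_lemma (m p k : ℕ) (hmp : m ≤ p) (ι : Type*) [Fintype ι]
    (hk : ∀ L : (ι × Fin (p.choose m)) → Finset ℤ, (∀ v, (L v).card ≤ m) →
      ∃ c : (ι × Fin (p.choose m)) → ℕ, (∀ v, c v ∈ Finset.Icc 1 k) ∧
        (∀ v, (c v : ℤ) ∉ L v) ∧
        ∀ ⦃u v⦄, (completeMultipartite ι (p.choose m)).Adj u v → c u ≠ c v) :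
    min ((Fintype.card ι : ℝ) + (1 - 1/(m+1))*p) ((m+1)*(Fintype.card ι)) ≤ k := by
  classical
  set n := Fintype.card ι with hn
  set s := p.choose m with hs
  set P : Finset (Finset ℤ) := Finset.powersetCard m (Finset.Icc (1:ℤ) p) with hP
  have hIccp : (Finset.Icc (1:ℤ) p).card = p := by
    rw [Int.card_Icc]; omega
  have hcardP : Fintype.card {A // A ∈ P} = s := by
    rw [Fintype.card_coe, hP, Finset.card_powersetCard, hIccp]
  have e2 : Fin s ≃ {A // A ∈ P} := (Fintype.equivFinOfCardEq hcardP).symm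
  set L : (ι × Fin s) → Finset ℤ := fun x => ((e2 x.2 : Finset ℤ)) with hL
  have hLcard : ∀ v, (L v).card ≤ m := by
    intro v
    exact (Finset.mem_powersetCard.1 (e2 v.2).2).2.le
  obtain ⟨c, hc1, hc2, hc3⟩ := hk L hLcard
  set Cpart : ι → Finset ℤ := fun i => Finset.image (fun v => (c (i,v) : ℤ)) Finset.univ
    with hCpart
  have hdisj : ∀ i j : ι, i ≠ j → Disjoint (Cpart i) (Cpart j) := by
    intro i j hij
    rw [Finset.disjoint_left]
    intro z hz1 hz2
    simp only [hCpart, Finset.mem_image, Finset.mem_univ, true_and] at hz1 hz2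
    obtain ⟨v, hv⟩ := hz1
    obtain ⟨w, hw⟩ := hz2
    have : c (i,v) = c (j,w) := by exact_mod_cast hv.trans hw.symm
    exact hc3 (show (completeMultipartite ι s).Adj (i,v) (j,w) from hij) this
  have hsub_k : ∀ i, Cpart i ⊆ Finset.Icc (1:ℤ) k := by
    intro i z hz
    simp only [hCpart, Finset.mem_image, Finset.mem_univ, true_and] at hz
    obtain ⟨v, hv⟩ := hz
    have := hc1 (i, v)
    rw [Finset.mem_Icc] at this ⊢
    omega
  have hbig : ∀ i, Cpart i ⊆ Finset.Icc (1:ℤ) p → m + 1 ≤ (Cpart i).card := by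
    intro i hsubp
    by_contra h'
    push_neg at h'
    obtain ⟨A, hCA, hAp, hAcard⟩ := Finset.exists_subsuperset_card_eq (n := m) hsubp
      (by omega) (by rw [hIccp]; exact hmp)
    have hA : A ∈ P := by rw [hP, Finset.mem_powersetCard]; exact ⟨hAp, hAcard⟩
    set v := e2.symm ⟨A, hA⟩ with hv
    apply hc2 (i, v)
    have hmem : (c (i,v) : ℤ) ∈ Cpart i := by
      simp only [hCpart, Finset.mem_image, Finset.mem_univ, true_and]
      exact ⟨v, rfl⟩
    have hLA : L (i, v) = A := by
      simp only [hL, hv, Equiv.apply_symm_apply]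
    rw [hLA]
    exact hCA hmem
  have hspos : 0 < s := Nat.choose_pos hmp
  have hne : ∀ i, (Cpart i).Nonempty := by
    intro i
    exact ⟨(c (i, ⟨0, hspos⟩) : ℤ), by
      simp only [hCpart, Finset.mem_image, Finset.mem_univ, true_and]
      exact ⟨_, rfl⟩⟩
  set T : Finset ι := Finset.univ.filter (fun i => Cpart i ⊆ Finset.Icc (1:ℤ) p) with hT
  set t := T.card with ht
  -- bound on any disjoint union
  by_cases hcase : T = Finset.univ
  · -- all parts inside [1,p]: (m+1)*n ≤ k
    have hU : (Finset.univ.biUnion Cpart).card = ∑ i, (Cpart i).card :=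
      Finset.card_biUnion (fun i _ j _ hij => hdisj i j hij)
    have hsum : n * (m+1) ≤ ∑ i, (Cpart i).card := by
      have := Finset.card_nsmul_le_sum Finset.univ (fun i => (Cpart i).card) (m+1)
        (fun i _ => hbig i (by
          have : i ∈ T := hcase ▸ Finset.mem_univ i
          exact (Finset.mem_filter.1 this).2))
      simpa [hn, smul_eq_mul] using this
    have hUk : (Finset.univ.biUnion Cpart).card ≤ k := by
      have hsub : Finset.univ.biUnion Cpart ⊆ Finset.Icc (1:ℤ) k :=
        Finset.biUnion_subset.2 fun i _ => hsub_k i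
      have := Finset.card_le_card hsub
      rw [Int.card_Icc] at this
      omega
    have hfin : (m+1) * n ≤ k := by
      rw [Nat.mul_comm]
      rw [hU] at hUk
      exact hsum.trans hUk
    refine le_trans (min_le_right _ _) ?_
    exact_mod_cast Nat.cast_le.2 hfin
  · -- some part uses a color > p
    have h1 : t * (m+1) ≤ p := by
      have hU : (T.biUnion Cpart).card = ∑ i ∈ T, (Cpart i).card :=
        Finset.card_biUnion (fun i _ j _ hij => hdisj i j hij)
      have hsum : t * (m+1) ≤ ∑ i ∈ T, (Cpart i).card := by
        have := Finset.card_nsmul_le_sum T (fun i => (Cpart i).card) (m+1)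
          (fun i hi => hbig i (Finset.mem_filter.1 hi).2)
        simpa [ht, smul_eq_mul] using this
      have hsub : T.biUnion Cpart ⊆ Finset.Icc (1:ℤ) p :=
        Finset.biUnion_subset.2 fun i hi => (Finset.mem_filter.1 hi).2
      have := Finset.card_le_card hsub
      omega
    set D : ι → Finset ℤ := fun i => Cpart i ∩ Finset.Icc ((p:ℤ)+1) k with hD
    have hDne : ∀ i ∈ Tᶜ, 1 ≤ (D i).card := by
      intro i hi
      rw [Finset.mem_compl, hT, Finset.mem_filter] at hi
      have hns : ¬ Cpart i ⊆ Finset.Icc (1:ℤ) p := fun h => hi ⟨Finset.mem_univ i, h⟩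
      rw [Finset.not_subset] at hns
      obtain ⟨z, hz1, hz2⟩ := hns
      have hzk := hsub_k i hz1
      rw [Finset.mem_Icc] at hzk
      rw [Finset.mem_Icc] at hz2
      refine Finset.card_pos.2 ⟨z, ?_⟩
      rw [hD, Finset.mem_inter, Finset.mem_Icc]
      exact ⟨hz1, by omega, hzk.2⟩
    have hUD : (Tᶜ.biUnion D).card = ∑ i ∈ Tᶜ, (D i).card :=
      Finset.card_biUnion (fun i _ j _ hij =>
        (hdisj i j hij).mono (Finset.inter_subset_left) (Finset.inter_subset_left))
    have hsumD : Tᶜ.card * 1 ≤ ∑ i ∈ Tᶜ, (D i).card := by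
      have := Finset.card_nsmul_le_sum Tᶜ (fun i => (D i).card) 1 hDne
      simpa [smul_eq_mul] using this
    have hsubD : Tᶜ.biUnion D ⊆ Finset.Icc ((p:ℤ)+1) k :=
      Finset.biUnion_subset.2 fun i _ => Finset.inter_subset_right
    have hcompl : Tᶜ.card = n - t := by
      rw [Finset.card_compl, hn, ht]
    have htn : t < n := by
      have : T ⊂ Finset.univ := Finset.ssubset_univ_iff.2 hcase
      exact Finset.card_lt_card this
    have hcc := Finset.card_le_card hsubD
    rw [hUD.symm] at hsumD
    have hIcck : (Finset.Icc ((p:ℤ)+1) (k:ℤ)).card = ((k:ℤ) - p).toNat := by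
      rw [Int.card_Icc]; ring_nf
    rw [hIcck] at hcc
    -- now: n - t ≤ ((k:ℤ)-p).toNat, t < n
    have hkZ : (p:ℤ) + ((n:ℤ) - t) ≤ (k:ℤ) := by omega
    refine le_trans (min_le_left _ _) ?_
    have hm1 : (0:ℝ) < (m:ℝ)+1 := by positivity
    have htR : (t:ℝ) ≤ (p:ℝ) / ((m:ℝ)+1) := by
      rw [le_div_iff₀ hm1]
      exact_mod_cast h1
    have hkR : (p:ℝ) + ((n:ℝ) - (t:ℝ)) ≤ (k:ℝ) := by exact_mod_cast hkZ
    have hexp : (1 - 1/((m:ℝ)+1))*(p:ℝ) = (p:ℝ) - (p:ℝ)/((m:ℝ)+1) := by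
      field_simp
    push_cast
    rw [hexp]
    linarith

lemma mem_lemma (m s : ℕ) (ι : Type*) [Fintype ι] :
    ∀ L : (ι × Fin s) → Finset ℤ, (∀ v, (L v).card ≤ m) →
      ∃ c : (ι × Fin s) → ℕ, (∀ v, c v ∈ Finset.Icc 1 ((m+1) * Fintype.card ι)) ∧
        (∀ v, (c v : ℤ) ∉ L v) ∧
        ∀ ⦃u v⦄, (completeMultipartite ι s).Adj u v → c u ≠ c v := by
  classical
  intro L hL
  set n := Fintype.card ι with hn
  set e := Fintype.equivFin ι with he
  have hex : ∀ x : ι × Fin s, ∃ y : ℕ,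
      ((m+1) * (e x.1 : ℕ) + 1 ≤ y ∧ y ≤ (m+1) * (e x.1 : ℕ) + (m+1)) ∧ (y:ℤ) ∉ L x := by
    intro x
    set a := (m+1) * (e x.1 : ℕ) with ha
    set B : Finset ℕ := Finset.Icc (a + 1) (a + (m+1)) with hB
    have hBcard : B.card = m + 1 := by rw [hB, Nat.card_Icc]; omega
    set Bad := B.filter (fun y : ℕ => ((y:ℤ) ∈ L x)) with hBad
    have hbadcard : Bad.card ≤ m := by
      have himg : Bad.image (fun y : ℕ => (y:ℤ)) ⊆ L x := by
        intro z hz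
        simp only [hBad, Finset.mem_image, Finset.mem_filter] at hz
        obtain ⟨y, ⟨_, hy2⟩, rfl⟩ := hz
        exact hy2
      have := Finset.card_le_card himg
      rw [Finset.card_image_of_injective _ (fun a b h => by exact_mod_cast h)] at this
      exact this.trans (hL x)
    have hsd : (B \ Bad).Nonempty := by
      apply Finset.card_pos.1
      rw [Finset.card_sdiff_of_subset (show Bad ⊆ B from Finset.filter_subset _ _)]
      omega
    obtain ⟨y, hy⟩ := hsd
    rw [Finset.mem_sdiff] at hy
    obtain ⟨hy1, hy2⟩ := hy
    rw [hB, Finset.mem_Icc] at hy1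
    refine ⟨y, ⟨hy1.1, hy1.2⟩, fun hmem => hy2 ?_⟩
    rw [hBad, Finset.mem_filter]
    exact ⟨by rw [hB, Finset.mem_Icc]; exact hy1, hmem⟩
  choose c hc1 hc2 using hex
  refine ⟨c, ?_, hc2, ?_⟩
  · intro v
    obtain ⟨h1, h2⟩ := hc1 v
    have hlt : ((e v.1 : ℕ) + 1) ≤ n := (e v.1).2
    have hmul : (m+1) * ((e v.1 : ℕ) + 1) ≤ (m+1) * n := Nat.mul_le_mul_left _ hlt
    rw [Nat.mul_succ] at hmul
    rw [Finset.mem_Icc]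
    omega
  · intro u v huv hcc
    have hne : u.1 ≠ v.1 := huv
    have hene : (e u.1 : ℕ) ≠ (e v.1 : ℕ) := by
      intro h
      exact hne (e.injective (Fin.val_injective h))
    obtain ⟨hu1, hu2⟩ := hc1 u
    obtain ⟨hv1, hv2⟩ := hc1 v
    rw [hcc] at hu1 hu2
    rcases Nat.lt_or_ge (e u.1 : ℕ) (e v.1 : ℕ) with h | h
    · have := Nat.mul_le_mul_left (m+1) (Nat.succ_le_of_lt h)
      rw [Nat.mul_succ] at this
      omega
    · have h' : (e v.1 : ℕ) < (e u.1 : ℕ) := lt_of_le_of_ne h (Ne.symm hene)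
      have := Nat.mul_le_mul_left (m+1) (Nat.succ_le_of_lt h')
      rw [Nat.mul_succ] at this
      omega

/-- For a complete multipartite graph `G` with every part of size `C(p,m)`:
`χ̄_m(G) ≥ min { χ(G) + (1 - 1/(m+1))·p , (m+1)·χ(G) }`. -/
theorem stmt18 (m p : ℕ) (hm : 0 < m) (hp : 0 < p) (ι : Type*) [Fintype ι] :
    min ((((completeMultipartite ι (p.choose m)).chromaticNumber.toNat : ℝ)) +
        (1 - 1 / (m + 1)) * p)
      ((m + 1) * ((completeMultipartite ι (p.choose m)).chromaticNumber.toNat : ℝ)) ≤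
    (avoidChromaticNumber (completeMultipartite ι (p.choose m)) m : ℝ) := by
  classical
  set n := Fintype.card ι with hn
  have hχ : (completeMultipartite ι (p.choose m)).chromaticNumber.toNat ≤ n := by
    have C : (completeMultipartite ι (p.choose m)).Coloring ι :=
      SimpleGraph.Coloring.mk (fun x => x.1) (fun {u v} h => h)
    have hcol := C.colorable
    have h := hcol.chromaticNumber_le
    have := ENat.toNat_le_toNat h (by simp)
    simpa [hn] using this
  have hRHSnn : (0:ℝ) ≤ (avoidChromaticNumber (completeMultipartite ι (p.choose m)) m : ℝ) :=
    Nat.cast_nonneg _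
  by_cases hmp : m ≤ p
  · have hkmem : avoidChromaticNumber (completeMultipartite ι (p.choose m)) m ∈
        {k | ∀ L : (ι × Fin (p.choose m)) → Finset ℤ, (∀ v, (L v).card ≤ m) →
          ∃ c : (ι × Fin (p.choose m)) → ℕ, (∀ v, c v ∈ Finset.Icc 1 k) ∧
            (∀ v, (c v : ℤ) ∉ L v) ∧
            ∀ ⦃u v⦄, (completeMultipartite ι (p.choose m)).Adj u v → c u ≠ c v} := by
      apply Nat.sInf_mem
      exact ⟨(m+1)*n, mem_lemma m (p.choose m) ι⟩
    have hmin := key_lemma m p _ hmp ι hkmem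
    refine le_trans (min_le_min ?_ ?_) hmin
    · exact add_le_add_left (by exact_mod_cast hχ) _
    · exact mul_le_mul_of_nonneg_left (by exact_mod_cast hχ) (by positivity)
  · have hs0 : p.choose m = 0 := Nat.choose_eq_zero_of_lt (not_le.1 hmp)
    haveI : IsEmpty (Fin (p.choose m)) := by rw [hs0]; infer_instance
    have hz : (completeMultipartite ι (p.choose m)).chromaticNumber = 0 :=
      chromaticNumber_eq_zero_of_isEmpty (G := _)
    refine le_trans (min_le_right _ _) ?_
    rw [hz]
    simpa using hRHSnn
end
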